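/- arXiv:2302.00264 — 8 statements merged into one kernel-verified Lean document; each statement's English description precedes it below -/
import Mathlib

section
/- In any goods instance, if there is an agent i and distinct items j, j' with v_i({j, j'}) ≥ μ_i and v_{i'}({j, j'}) ≤ μ_{i'} for every other agent i' ≠ i, then removing agent i together with the items {j, j'} (allocating {j, j'} to i) is a valid reduction. -/
open Finset

/-- `A` is an (ordered) partition of the item set `M` into bundles indexed by
the agent set `N`: bundles are pairwise disjoint subsets of `M` whose union is `M`. -/
def IsPartition (N M : Finset ℕ) (A : ℕ → Finset ℕ) : Prop :=
  (∀ i ∈ N, A i ⊆ M) ∧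
  (∀ i ∈ N, ∀ j ∈ N, i ≠ j → Disjoint (A i) (A j)) ∧
  N.biUnion A = M

/-- Additive value of a bundle `B` under item values `v`. -/
noncomputable def bval (v : ℕ → ℝ) (B : Finset ℕ) : ℝ := ∑ g ∈ B, v g

/-- The maximin share of an agent with item values `v`, over the instance with
agent set `N` and item set `M`: the largest, over all partitions, of the minimum
bundle value. -/
noncomputable def mms (N M : Finset ℕ) (v : ℕ → ℝ) : ℝ :=
  sSup { x | ∃ A : ℕ → Finset ℕ, IsPartition N M A ∧
    x = sInf ((fun i => bval v (A i)) '' (N : Set ℕ)) }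

/-- `A` is an MMS partition for an agent with item values `v`: every bundle is
worth at least the agent's maximin share. -/
def IsMMSPartition (N M : Finset ℕ) (v : ℕ → ℝ) (A : ℕ → Finset ℕ) : Prop :=
  IsPartition N M A ∧ ∀ j ∈ N, mms N M v ≤ bval v (A j)

/-- The instance `(N, M, v)` admits an MMS allocation: an allocation giving
every agent a bundle worth at least her maximin share. -/
def ExistsMMSAllocation (N M : Finset ℕ) (v : ℕ → ℕ → ℝ) : Prop :=
  ∃ A : ℕ → Finset ℕ, IsPartition N M A ∧
    ∀ i ∈ N, mms N M (v i) ≤ bval (v i) (A i)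

/-- A goods instance: all item values are non-negative. -/
def GoodsInstance (N M : Finset ℕ) (v : ℕ → ℕ → ℝ) : Prop :=
  ∀ i ∈ N, ∀ j ∈ M, 0 ≤ v i j

/-- A chores instance: all item values are non-positive. -/
def ChoresInstance (N M : Finset ℕ) (v : ℕ → ℕ → ℝ) : Prop :=
  ∀ i ∈ N, ∀ j ∈ M, v i j ≤ 0

/-- Ordered goods instance: lower-numbered items are (weakly) more valuable. -/
def OrderedGoods (N M : Finset ℕ) (v : ℕ → ℕ → ℝ) : Prop :=
  ∀ i ∈ N, ∀ j ∈ M, ∀ k ∈ M, j ≤ k → v i k ≤ v i j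

/-- Ordered chores instance: lower-numbered items are (weakly) worse. -/
def OrderedChores (N M : Finset ℕ) (v : ℕ → ℕ → ℝ) : Prop :=
  ∀ i ∈ N, ∀ j ∈ M, ∀ k ∈ M, j ≤ k → v i j ≤ v i k

/-- Removing agents `N'` and items `M'` is a valid reduction: `M'` can be
partitioned among the agents of `N'` so that each receives a bundle worth at
least her MMS in the original instance, and in the reduced instance every
remaining agent's MMS is at least her MMS in the original instance. -/
def ValidReduction (N M : Finset ℕ) (v : ℕ → ℕ → ℝ) (N' M' : Finset ℕ) : Prop :=
  N' ⊆ N ∧ M' ⊆ M ∧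
  (∃ B : ℕ → Finset ℕ, IsPartition N' M' B ∧
    ∀ i ∈ N', mms N M (v i) ≤ bval (v i) (B i)) ∧
  ∀ i ∈ N \ N', mms N M (v i) ≤ mms (N \ N') (M \ M') (v i)

/-- In an ordered instance, bundle `B` dominates bundle `B'`: there is an
injective map `f : B' → B` with `f j ≤ j` for all `j ∈ B'`. -/
def Dominates (B B' : Finset ℕ) : Prop :=
  ∃ f : ℕ → ℕ, Set.InjOn f (B' : Set ℕ) ∧ ∀ j ∈ B', f j ∈ B ∧ f j ≤ j

def mmsSet (N M : Finset ℕ) (v : ℕ → ℝ) : Set ℝ :=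
  { x | ∃ A : ℕ → Finset ℕ, IsPartition N M A ∧
    x = sInf ((fun i => bval v (A i)) '' (N : Set ℕ)) }

lemma mms_eq_sSup (N M : Finset ℕ) (v : ℕ → ℝ) : mms N M v = sSup (mmsSet N M v) := rfl

lemma trivial_partition (N M : Finset ℕ) {i₀ : ℕ} (h : i₀ ∈ N) :
    IsPartition N M (fun k => if k = i₀ then M else ∅) := by
  refine ⟨fun k _ => ?_, fun k _ l _ hkl => ?_, ?_⟩
  · simp only []
    by_cases hk : k = i₀ <;> simp [hk]
  · rcases eq_or_ne k i₀ with rfl | hk0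
    · simp [if_neg (Ne.symm hkl)]
    · simp [if_neg hk0]
  · apply subset_antisymm
    · intro g hg
      simp only [mem_biUnion] at hg
      obtain ⟨d, _, hd⟩ := hg
      by_cases hd0 : d = i₀ <;> simp [hd0] at hd
      exact hd
    · intro g hg
      exact mem_biUnion.mpr ⟨i₀, h, by simp [hg]⟩

lemma mmsSet_subset (N M : Finset ℕ) (v : ℕ → ℝ) (hN : N.Nonempty) :
    mmsSet N M v ⊆ ↑(M.powerset.image (bval v)) := by
  rintro x ⟨A, hA, rfl⟩
  have hfin : ((fun i => bval v (A i)) '' (N : Set ℕ)).Finite :=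
    N.finite_toSet.image _
  have hne : ((fun i => bval v (A i)) '' (N : Set ℕ)).Nonempty :=
    (Set.image_nonempty).mpr (by exact_mod_cast hN)
  obtain ⟨i₀, hi₀, heq⟩ := hne.csInf_mem hfin
  rw [← heq]
  simp only [Finset.coe_image, Set.mem_image, Finset.mem_coe, Finset.mem_powerset]
  exact ⟨A i₀, hA.1 i₀ (by exact_mod_cast hi₀), rfl⟩

lemma mmsSet_finite (N M : Finset ℕ) (v : ℕ → ℝ) (hN : N.Nonempty) :
    (mmsSet N M v).Finite :=
  Set.Finite.subset (Finset.finite_toSet _) (mmsSet_subset N M v hN)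

lemma mmsSet_nonempty (N M : Finset ℕ) (v : ℕ → ℝ) (hN : N.Nonempty) :
    (mmsSet N M v).Nonempty := by
  obtain ⟨i₀, hi₀⟩ := hN
  exact ⟨_, ⟨_, trivial_partition N M hi₀, rfl⟩⟩

/-- the mms value is attained and every bundle of the optimal partition is worth ≥ mms -/
lemma exists_mms_partition (N M : Finset ℕ) (v : ℕ → ℝ) (hN : N.Nonempty) :
    ∃ A : ℕ → Finset ℕ, IsPartition N M A ∧ ∀ k ∈ N, mms N M v ≤ bval v (A k) := by
  have hmem : mms N M v ∈ mmsSet N M v :=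
    (mmsSet_nonempty N M v hN).csSup_mem (mmsSet_finite N M v hN)
  obtain ⟨A, hA, heq⟩ := hmem
  refine ⟨A, hA, fun k hk => ?_⟩
  rw [heq]
  have hfin : ((fun i => bval v (A i)) '' (N : Set ℕ)).Finite :=
    N.finite_toSet.image _
  exact csInf_le hfin.bddBelow ⟨k, by exact_mod_cast hk, rfl⟩

/-- lower bound on mms from any partition -/
lemma mms_ge (N M : Finset ℕ) (v : ℕ → ℝ) {A : ℕ → Finset ℕ} {c : ℝ}
    (hN : N.Nonempty) (hA : IsPartition N M A)
    (hc : ∀ k ∈ N, c ≤ bval v (A k)) : c ≤ mms N M v := by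
  have hmem : sInf ((fun i => bval v (A i)) '' (N : Set ℕ)) ∈ mmsSet N M v := ⟨A, hA, rfl⟩
  have h1 : c ≤ sInf ((fun i => bval v (A i)) '' (N : Set ℕ)) := by
    apply le_csInf ((Set.image_nonempty).mpr (by exact_mod_cast hN))
    rintro x ⟨k, hk, rfl⟩
    exact hc k (by exact_mod_cast hk)
  exact h1.trans (le_csSup ((mmsSet_finite N M v hN).bddAbove) hmem)

theorem two_item_reduction (n m : ℕ) (v : ℕ → ℕ → ℝ)
    (hgoods : GoodsInstance (Finset.Icc 1 n) (Finset.Icc 1 m) v)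
    (i j j' : ℕ) (hi : i ∈ Finset.Icc 1 n)
    (hj : j ∈ Finset.Icc 1 m) (hj' : j' ∈ Finset.Icc 1 m) (hne : j ≠ j')
    (hval : mms (Finset.Icc 1 n) (Finset.Icc 1 m) (v i) ≤ bval (v i) {j, j'})
    (hothers : ∀ i' ∈ Finset.Icc 1 n, i' ≠ i →
      bval (v i') {j, j'} ≤ mms (Finset.Icc 1 n) (Finset.Icc 1 m) (v i')) :
    ValidReduction (Finset.Icc 1 n) (Finset.Icc 1 m) v {i} {j, j'} := by
  set N := Finset.Icc 1 n with hNdef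
  set M := Finset.Icc 1 m with hMdef
  have hM' : ({j, j'} : Finset ℕ) ⊆ M := by
    intro g hg
    rcases Finset.mem_insert.mp hg with rfl | hg
    · exact hj
    · exact (Finset.mem_singleton.mp hg) ▸ hj'
  refine ⟨Finset.singleton_subset_iff.mpr hi, hM', ⟨fun _ => {j, j'}, ?_, ?_⟩, ?_⟩
  · exact ⟨fun k _ => le_refl _,
      fun k hk l hl hkl =>
        absurd ((Finset.mem_singleton.mp hk).trans (Finset.mem_singleton.mp hl).symm) hkl,
      by simp⟩
  · intro k hk
    rw [Finset.mem_singleton.mp hk]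
    exact hval
  · intro i' hi'mem
    rw [Finset.mem_sdiff, Finset.mem_singleton] at hi'mem
    obtain ⟨hi'N, hi'ne⟩ := hi'mem
    set w := v i' with hw
    set μ := mms N M w with hmu
    obtain ⟨A, hA, hAval⟩ := exists_mms_partition N M w ⟨i, hi⟩
    obtain ⟨hAsub, hAdisj, hAun⟩ := hA
    obtain ⟨a, haN, hja⟩ := Finset.mem_biUnion.mp (hAun ▸ hj : j ∈ N.biUnion A)
    obtain ⟨b, hbN, hj'b⟩ := Finset.mem_biUnion.mp (hAun ▸ hj' : j' ∈ N.biUnion A)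
    -- choose c ∈ N, c ≠ a
    set c := if a = i then i' else i with hcdef
    have hcN : c ∈ N := by by_cases h : a = i <;> simp [hcdef, h, hi'N, hi]
    have hca : c ≠ a := by
      by_cases h : a = i
      · simp only [hcdef, if_pos h]; rw [h]; exact hi'ne
      · simp only [hcdef, if_neg h]; exact fun hh => h hh.symm
    set b' := if a = b then c else b with hb'def
    have hb'N : b' ∈ N := by by_cases h : a = b <;> simp [hb'def, h, hcN, hbN]
    have hab' : a ≠ b' := by
      by_cases h : a = b
      · simp only [hb'def, if_pos h]; exact fun hh => hca hh.symm
      · simp only [hb'def, if_neg h]; exact h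
    have hj'ab' : j' ∈ A a ∪ A b' := by
      by_cases h : a = b
      · exact Finset.mem_union_left _ (h ▸ hj'b)
      · simp only [hb'def, if_neg h]; exact Finset.mem_union_right _ hj'b
    have hjj'sub : ({j, j'} : Finset ℕ) ⊆ A a ∪ A b' := by
      intro g hg
      rcases Finset.mem_insert.mp hg with rfl | hg
      · exact Finset.mem_union_left _ hja
      · exact (Finset.mem_singleton.mp hg) ▸ hj'ab'
    have hdab : Disjoint (A a) (A b') := hAdisj a haN b' hb'N hab'
    set Mg := (A a ∪ A b') \ ({j, j'} : Finset ℕ) with hMgdef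
    have hMgval : μ ≤ bval w Mg := by
      have h1 : bval w Mg = bval w (A a ∪ A b') - bval w {j, j'} :=
        Finset.sum_sdiff_eq_sub hjj'sub
      have h2 : bval w (A a ∪ A b') = bval w (A a) + bval w (A b') :=
        Finset.sum_union hdab
      have h3 := hothers i' hi'N hi'ne
      rw [h1, h2]
      linarith [hAval a haN, hAval b' hb'N]
    set f : ℕ → ℕ := fun k => if k = i then b' else if k = b' then i else k with hfdef
    have hfi : f i = b' := by simp [hfdef]
    have hfinv : ∀ k, f (f k) = k := by
      intro k
      simp only [hfdef]
      by_cases h1 : k = i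
      · by_cases h2 : b' = i <;> simp [h1, h2]
      · by_cases h2 : k = b'
        · have hb'i : ¬ b' = i := h2 ▸ h1
          simp [h1, h2, hb'i]
        · simp [h1, h2]
    have hfN : ∀ k ∈ N, f k ∈ N := by
      intro k hk
      by_cases h1 : k = i
      · simp only [hfdef, if_pos h1]; exact hb'N
      · by_cases h2 : k = b'
        · simp only [hfdef, if_neg h1, if_pos h2]; exact hi
        · simp only [hfdef, if_neg h1, if_neg h2]; exact hk
    have hfne : ∀ k, k ≠ i → f k ≠ b' := by
      intro k h1
      by_cases h2 : k = b'
      · simp only [hfdef, if_neg h1, if_pos h2]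
        intro hh; exact h1 (h2.trans hh.symm)
      · simpa [hfdef, h1, h2] using h2
    have hfinj : ∀ k l, f k = f l → k = l := by
      intro k l h
      have := congrArg f h
      rwa [hfinv, hfinv] at this
    set C : ℕ → Finset ℕ := fun k => if f k = a then Mg else A (f k) with hCdef
    -- j, j' not in bundles other than a / b'
    have hjnot : ∀ d ∈ N, d ≠ a → j ∉ A d := by
      intro d hd hda hjd
      exact (Finset.disjoint_left.mp (hAdisj d hd a haN hda)) hjd hja
    have hj'not : ∀ d ∈ N, d ≠ a → d ≠ b' → j' ∉ A d := by
      intro d hd hda hdb hj'd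
      rcases Finset.mem_union.mp hj'ab' with h | h
      · exact (Finset.disjoint_left.mp (hAdisj d hd a haN hda)) hj'd h
      · exact (Finset.disjoint_left.mp (hAdisj d hd b' hb'N hdb)) hj'd h
    have hCsub : ∀ k ∈ N \ {i}, C k ⊆ M \ ({j, j'} : Finset ℕ) := by
      intro k hk
      rw [Finset.mem_sdiff, Finset.mem_singleton] at hk
      obtain ⟨hkN, hki⟩ := hk
      by_cases h : f k = a
      · simp only [hCdef, if_pos h]
        exact Finset.sdiff_subset_sdiff
          (Finset.union_subset (hAsub a haN) (hAsub b' hb'N)) le_rfl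
      · simp only [hCdef, if_neg h]
        intro g hg
        rw [Finset.mem_sdiff]
        refine ⟨hAsub (f k) (hfN k hkN) hg, ?_⟩
        intro hgm
        rcases Finset.mem_insert.mp hgm with rfl | hgm
        · exact hjnot (f k) (hfN k hkN) h hg
        · rw [Finset.mem_singleton.mp hgm] at hg
          exact hj'not (f k) (hfN k hkN) h (hfne k hki) hg
    have hCpart : IsPartition (N \ {i}) (M \ ({j, j'} : Finset ℕ)) C := by
      refine ⟨hCsub, ?_, ?_⟩
      · intro k hk l hl hkl
        rw [Finset.mem_sdiff, Finset.mem_singleton] at hk hl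
        have hfkl : f k ≠ f l := fun h => hkl (hfinj k l h)
        by_cases h1 : f k = a
        · have h2 : f l ≠ a := fun hh => hfkl (h1.trans hh.symm)
          simp only [hCdef, if_pos h1, if_neg h2]
          apply Disjoint.mono_left (Finset.sdiff_subset)
          rw [Finset.disjoint_union_left]
          exact ⟨hAdisj a haN (f l) (hfN l hl.1) (fun hh => h2 hh.symm),
            hAdisj b' hb'N (f l) (hfN l hl.1) (fun hh => hfne l hl.2 hh.symm)⟩
        · by_cases h2 : f l = a
          · simp only [hCdef, if_neg h1, if_pos h2]
            apply Disjoint.mono_right (Finset.sdiff_subset)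
            rw [Finset.disjoint_union_right]
            exact ⟨hAdisj (f k) (hfN k hk.1) a haN h1,
              hAdisj (f k) (hfN k hk.1) b' hb'N (hfne k hk.2)⟩
          · simp only [hCdef, if_neg h1, if_neg h2]
            exact hAdisj (f k) (hfN k hk.1) (f l) (hfN l hl.1) hfkl
      · apply subset_antisymm
        · exact Finset.biUnion_subset.mpr hCsub
        · intro g hg
          rw [Finset.mem_sdiff] at hg
          obtain ⟨hgM, hgjj⟩ := hg
          obtain ⟨d, hdN, hgd⟩ := Finset.mem_biUnion.mp (hAun ▸ hgM : g ∈ N.biUnion A)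
          rw [Finset.mem_biUnion]
          by_cases hd : d = a ∨ d = b'
          · have hfaN : f a ∈ N := hfN a haN
            have hfai : f a ≠ i := by
              intro hh
              exact hab' (by rw [← hfinv a, hh, hfi])
            refine ⟨f a, Finset.mem_sdiff.mpr ⟨hfaN, by simpa using hfai⟩, ?_⟩
            have hCfa : C (f a) = Mg := by
              simp only [hCdef]; rw [hfinv a, if_pos rfl]
            rw [hCfa, hMgdef, Finset.mem_sdiff]
            refine ⟨?_, hgjj⟩
            rcases hd with rfl | rfl
            · exact Finset.mem_union_left _ hgd
            · exact Finset.mem_union_right _ hgd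
          · push_neg at hd
            obtain ⟨hda, hdb⟩ := hd
            have hfdN : f d ∈ N := hfN d hdN
            have hfdi : f d ≠ i := by
              intro hh
              exact hdb (by rw [← hfinv d, hh, hfi])
            refine ⟨f d, Finset.mem_sdiff.mpr ⟨hfdN, by simpa using hfdi⟩, ?_⟩
            have hCfd : C (f d) = A d := by
              simp only [hCdef]; rw [hfinv d, if_neg hda]
            rw [hCfd]; exact hgd
    have hCval : ∀ k ∈ N \ {i}, μ ≤ bval w (C k) := by
      intro k hk
      rw [Finset.mem_sdiff, Finset.mem_singleton] at hk
      by_cases h : f k = a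
      · simpa only [hCdef, if_pos h] using hMgval
      · simp only [hCdef, if_neg h]
        exact hAval (f k) (hfN k hk.1)
    exact mms_ge (N \ {i}) (M \ {j, j'}) w
      ⟨i', Finset.mem_sdiff.mpr ⟨hi'N, by simpa using hi'ne⟩⟩ hCpart hCval
end

section
/- In any ordered goods instance with m ≥ 2 items, if there is an agent i and an item j with v_i(j) ≥ μ_i and v_{i'}(j) < μ_{i'} for every other agent i' ≠ i, then removing agent i together with the items {j, j'}, where j' is the least valuable item of M ∖ {j} (i.e., j' = m if j ≠ m and j' = m − 1 if j = m), is a valid reduction. -/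
open Finset

lemma bval_le_abs_sum {M B : Finset ℕ} (v : ℕ → ℝ) (h : B ⊆ M) :
    bval v B ≤ ∑ g ∈ M, |v g| := by
  calc bval v B = ∑ g ∈ B, v g := rfl
    _ ≤ ∑ g ∈ B, |v g| := Finset.sum_le_sum (fun g _ => le_abs_self _)
    _ ≤ ∑ g ∈ M, |v g| := Finset.sum_le_sum_of_subset_of_nonneg h (fun g _ _ => abs_nonneg _)

lemma mmsSet_bddAbove (N M : Finset ℕ) (v : ℕ → ℝ) (hN : N.Nonempty) :
    BddAbove { x | ∃ A : ℕ → Finset ℕ, IsPartition N M A ∧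
      x = sInf ((fun i => bval v (A i)) '' (N : Set ℕ)) } := by
  refine ⟨∑ g ∈ M, |v g|, ?_⟩
  rintro x ⟨A, hA, rfl⟩
  obtain ⟨k, hk⟩ := hN
  have h1 : sInf ((fun i => bval v (A i)) '' (N : Set ℕ)) ≤ bval v (A k) :=
    csInf_le (Set.Finite.bddBelow (N.finite_toSet.image _)) ⟨k, hk, rfl⟩
  exact h1.trans (bval_le_abs_sum v (hA.1 k hk))

lemma mmsSet_finite_s7 (N M : Finset ℕ) (v : ℕ → ℝ) :
    Set.Finite { x | ∃ A : ℕ → Finset ℕ, IsPartition N M A ∧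
      x = sInf ((fun i => bval v (A i)) '' (N : Set ℕ)) } := by
  have hF : Set.Finite ((fun B => bval v B) '' (M.powerset : Finset (Finset ℕ))) :=
    (M.powerset).finite_toSet.image _
  have hsub : Set.Finite {T : Set ℝ | T ⊆ (fun B => bval v B) '' (M.powerset : Finset (Finset ℕ))} :=
    hF.finite_subsets
  refine Set.Finite.subset (hsub.image sInf) ?_
  rintro x ⟨A, hA, rfl⟩
  refine ⟨(fun i => bval v (A i)) '' (N : Set ℕ), ?_, rfl⟩
  rintro y ⟨t, ht, rfl⟩
  exact ⟨A t, by simpa using hA.1 t ht, rfl⟩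

lemma key (N M : Finset ℕ) (v : ℕ → ℝ)
    (hnn : ∀ g ∈ M, 0 ≤ v g)
    (i j j' : ℕ) (hiN : i ∈ N) (hjM : j ∈ M) (hj'M : j' ∈ M) (hjj' : j ≠ j')
    (hj'min : ∀ g ∈ M, g ≠ j → v j' ≤ v g)
    (hin : (N \ {i}).Nonempty)
    (hvj : v j < mms N M v) :
    mms N M v ≤ mms (N \ {i}) (M \ {j, j'}) v := by
  obtain ⟨A, hA, hAmms⟩ := exists_mms_partition N M v ⟨i, hiN⟩
  obtain ⟨hsub, hdisj, hcov⟩ := hA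
  obtain ⟨k, hkN, hjk⟩ := Finset.mem_biUnion.1 (show j ∈ N.biUnion A from hcov ▸ hjM)
  obtain ⟨l, hlN, hj'l⟩ := Finset.mem_biUnion.1 (show j' ∈ N.biUnion A from hcov ▸ hj'M)
  -- A k has an element other than j
  have hAkne : (A k \ {j}).Nonempty := by
    by_contra h
    rw [Finset.not_nonempty_iff_eq_empty, Finset.sdiff_eq_empty_iff_subset] at h
    have hAk : A k = {j} := Finset.Subset.antisymm h (Finset.singleton_subset_iff.2 hjk)
    have h2 := hAmms k hkN
    rw [hAk] at h2
    have : bval v {j} = v j := Finset.sum_singleton _ _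
    linarith [this ▸ h2]
  obtain ⟨g, hg⟩ := hAkne
  rw [Finset.mem_sdiff, Finset.mem_singleton] at hg
  obtain ⟨hgAk, hgj⟩ := hg
  obtain ⟨c, hc⟩ := hin
  rw [Finset.mem_sdiff, Finset.mem_singleton] at hc
  -- choose some element of N other than k
  set t0 : ℕ := if k = i then c else i with ht0def
  have ht0 : t0 ∈ N ∧ t0 ≠ k := by
    by_cases h : k = i
    · rw [ht0def, if_pos h]
      exact ⟨hc.1, fun h2 => hc.2 (h2.trans h)⟩
    · rw [ht0def, if_neg h]
      exact ⟨hiN, fun h2 => h h2.symm⟩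
  set ts : ℕ := if j' ∈ A k then t0 else l with htsdef
  have htsN : ts ∈ N := by by_cases h : j' ∈ A k <;> simp [htsdef, h, ht0.1, hlN]
  have htsk : ts ≠ k := by
    by_cases h : j' ∈ A k
    · simp [htsdef, h, ht0.2]
    · simp only [htsdef, if_neg h]
      exact fun hlk => h (hlk ▸ hj'l)
  have hj'mem : j' ∈ A ts ∪ (A k \ {j}) := by
    by_cases h : j' ∈ A k
    · exact Finset.mem_union_right _ (Finset.mem_sdiff.2 ⟨h, by simp [Ne.symm hjj']⟩)
    · simp only [htsdef, if_neg h]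
      exact Finset.mem_union_left _ hj'l
  have hjnot : ∀ t ∈ N, t ≠ k → j ∉ A t := fun t ht htk hmem =>
    Finset.disjoint_left.1 (hdisj t ht k hkN htk) hmem hjk
  have hj'not : ∀ t ∈ N, t ≠ k → t ≠ ts → j' ∉ A t := by
    intro t ht htk hts hmem
    by_cases h : j' ∈ A k
    · exact Finset.disjoint_left.1 (hdisj t ht k hkN htk) hmem h
    · have : ts = l := by simp [htsdef, h]
      exact Finset.disjoint_left.1 (hdisj t ht l hlN (this ▸ hts)) hmem hj'l
  set B : ℕ → Finset ℕ := fun t => if t = ts then (A ts ∪ (A k \ {j})) \ {j'} else A t with hBdef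
  have hBne : ∀ s, s ≠ ts → B s = A s := fun s hs => by simp [hBdef, hs]
  have hBts : B ts = (A ts ∪ (A k \ {j})) \ {j'} := by simp [hBdef]
  -- bundles are inside M \ {j, j'}
  have hBsub : ∀ s ∈ N, s ≠ k → B s ⊆ M \ {j, j'} := by
    intro s hs hsk x hx
    rw [Finset.mem_sdiff, Finset.mem_insert, Finset.mem_singleton]
    by_cases h : s = ts
    · rw [h, hBts, Finset.mem_sdiff, Finset.mem_singleton] at hx
      obtain ⟨hxu, hxj'⟩ := hx
      rcases Finset.mem_union.1 hxu with hx1 | hx2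
      · refine ⟨hsub ts htsN hx1, ?_⟩
        rintro (h1 | h1)
        · exact hjnot ts htsN htsk (h1 ▸ hx1)
        · exact hxj' h1
      · rw [Finset.mem_sdiff, Finset.mem_singleton] at hx2
        refine ⟨hsub k hkN hx2.1, ?_⟩
        rintro (h1 | h1)
        · exact hx2.2 h1
        · exact hxj' h1
    · rw [hBne s h] at hx
      refine ⟨hsub s hs hx, ?_⟩
      rintro (h1 | h1)
      · exact hjnot s hs hsk (h1 ▸ hx)
      · exact hj'not s hs hsk h (h1 ▸ hx)
  -- pairwise disjoint
  have hBsubA : ∀ s, B s ⊆ A s ∪ A k := by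
    intro s
    by_cases h : s = ts
    · subst h; rw [hBts]
      exact Finset.sdiff_subset.trans (Finset.union_subset_union_right Finset.sdiff_subset)
    · rw [hBne s h]; exact Finset.subset_union_left
  have hBdisj : ∀ s1 ∈ N, s1 ≠ k → ∀ s2 ∈ N, s2 ≠ k → s1 ≠ s2 → Disjoint (B s1) (B s2) := by
    intro s1 hs1 hs1k s2 hs2 hs2k hne
    by_cases h1 : s1 = ts
    · have h2 : s2 ≠ ts := fun h => hne (h1.trans h.symm)
      rw [hBne s2 h2]
      refine Finset.disjoint_left.2 fun x hx hx2 => ?_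
      rcases Finset.mem_union.1 (hBsubA s1 hx) with hxa | hxk
      · exact Finset.disjoint_left.1 (hdisj s1 hs1 s2 hs2 hne) hxa hx2
      · exact Finset.disjoint_left.1 (hdisj k hkN s2 hs2 (Ne.symm hs2k)) hxk hx2
    · rw [hBne s1 h1]
      by_cases h2 : s2 = ts
      · refine Finset.disjoint_left.2 fun x hx hx2 => ?_
        rcases Finset.mem_union.1 (hBsubA s2 hx2) with hxa | hxk
        · exact Finset.disjoint_left.1 (hdisj s1 hs1 s2 hs2 hne) hx hxa
        · exact Finset.disjoint_left.1 (hdisj s1 hs1 k hkN hs1k) hx hxk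
      · rw [hBne s2 h2]; exact hdisj s1 hs1 s2 hs2 hne
  -- value bound
  have hBval : ∀ s ∈ N, s ≠ k → mms N M v ≤ bval v (B s) := by
    intro s hs hsk
    by_cases h : s = ts
    · subst h
      rw [hBts]
      have hdU : Disjoint (A ts) (A k \ {j}) :=
        (hdisj ts htsN k hkN htsk).mono_right Finset.sdiff_subset
      have hU : bval v (A ts ∪ (A k \ {j})) = bval v (A ts) + bval v (A k \ {j}) :=
        Finset.sum_union hdU
      have herase : (A ts ∪ (A k \ {j})) \ {j'} = (A ts ∪ (A k \ {j})).erase j' :=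
        Finset.sdiff_singleton_eq_erase j' _
      have hsum : bval v ((A ts ∪ (A k \ {j})).erase j') + v j'
          = bval v (A ts ∪ (A k \ {j})) := Finset.sum_erase_add _ _ hj'mem
      have hgv : v j' ≤ bval v (A k \ {j}) := by
        have h1 : v j' ≤ v g := hj'min g (hsub k hkN hgAk) hgj
        have h2 : v g ≤ bval v (A k \ {j}) :=
          Finset.single_le_sum (fun x hx => hnn x (hsub k hkN (Finset.mem_sdiff.1 hx).1))
            (Finset.mem_sdiff.2 ⟨hgAk, by simp [hgj]⟩)
        linarith
      have hts_val := hAmms ts htsN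
      rw [herase]
      rw [hU] at hsum
      linarith
    · rw [hBne s h]; exact hAmms s hs
  -- reindexing
  set A' : ℕ → Finset ℕ := fun t => B (if t = k then i else t) with hA'def
  have hsigma : ∀ t, t ∈ N → t ≠ i → (if t = k then i else t) ∈ N ∧ (if t = k then i else t) ≠ k := by
    intro t ht hti
    by_cases h : t = k
    · rw [if_pos h]
      exact ⟨hiN, fun hik => hti (by rw [h, ← hik])⟩
    · rw [if_neg h]
      exact ⟨ht, h⟩
  have hA'part : IsPartition (N \ {i}) (M \ {j, j'}) A' := by
    refine ⟨?_, ?_, ?_⟩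
    · intro t ht
      rw [Finset.mem_sdiff, Finset.mem_singleton] at ht
      obtain ⟨hsN', hsk'⟩ := hsigma t ht.1 ht.2
      exact hBsub _ hsN' hsk'
    · intro t1 ht1 t2 ht2 hne
      rw [Finset.mem_sdiff, Finset.mem_singleton] at ht1 ht2
      obtain ⟨h1N, h1k⟩ := hsigma t1 ht1.1 ht1.2
      obtain ⟨h2N, h2k⟩ := hsigma t2 ht2.1 ht2.2
      have hinj : (if t1 = k then i else t1) ≠ (if t2 = k then i else t2) := by
        by_cases a : t1 = k
        · by_cases b : t2 = k
          · exact absurd (a.trans b.symm) hne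
          · rw [if_pos a, if_neg b]
            exact fun h => ht2.2 h.symm
        · by_cases b : t2 = k
          · rw [if_neg a, if_pos b]
            exact ht1.2
          · rw [if_neg a, if_neg b]
            exact hne
      exact hBdisj _ h1N h1k _ h2N h2k hinj
    · refine Finset.Subset.antisymm (Finset.biUnion_subset.2 fun t ht => ?_) fun x hx => ?_
      · rw [Finset.mem_sdiff, Finset.mem_singleton] at ht
        obtain ⟨hsN', hsk'⟩ := hsigma t ht.1 ht.2
        exact hBsub _ hsN' hsk'
      · rw [Finset.mem_sdiff, Finset.mem_insert, Finset.mem_singleton] at hx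
        push_neg at hx
        obtain ⟨hxM, hxj, hxj'⟩ := hx
        obtain ⟨s, hsN', hxs⟩ := Finset.mem_biUnion.1 (show x ∈ N.biUnion A from hcov ▸ hxM)
        have hdest : ∃ s0, s0 ∈ N ∧ s0 ≠ k ∧ x ∈ B s0 := by
          by_cases hsk : s = k
          · refine ⟨ts, htsN, htsk, ?_⟩
            rw [hBts, Finset.mem_sdiff, Finset.mem_singleton]
            exact ⟨Finset.mem_union_right _ (Finset.mem_sdiff.2 ⟨hsk ▸ hxs, by simp [hxj]⟩), hxj'⟩
          · by_cases hst : s = ts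
            · refine ⟨ts, htsN, htsk, ?_⟩
              rw [hBts, Finset.mem_sdiff, Finset.mem_singleton]
              exact ⟨Finset.mem_union_left _ (hst ▸ hxs), hxj'⟩
            · exact ⟨s, hsN', hsk, by rw [hBne s hst]; exact hxs⟩
        obtain ⟨s0, hs0N, hs0k, hxB⟩ := hdest
        refine Finset.mem_biUnion.2 ⟨if s0 = i then k else s0, ?_, ?_⟩
        · rw [Finset.mem_sdiff, Finset.mem_singleton]
          by_cases h : s0 = i
          · rw [if_pos h]
            exact ⟨hkN, fun hki => hs0k (h.trans hki.symm)⟩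
          · rw [if_neg h]
            exact ⟨hs0N, h⟩
        · have hAB : A' (if s0 = i then k else s0) = B s0 := by
            simp only [hA'def]
            by_cases h : s0 = i
            · rw [if_pos h, if_pos rfl, h]
            · rw [if_neg h, if_neg hs0k]
          rw [hAB]
          exact hxB
  have hne' : ((fun t => bval v (A' t)) '' ((N \ {i} : Finset ℕ) : Set ℕ)).Nonempty :=
    ⟨_, ⟨c, by simp [hc.1, hc.2], rfl⟩⟩
  have h1 : mms N M v ≤ sInf ((fun t => bval v (A' t)) '' ((N \ {i} : Finset ℕ) : Set ℕ)) := by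
    refine le_csInf hne' ?_
    rintro b ⟨t, ht, rfl⟩
    rw [Finset.mem_coe, Finset.mem_sdiff, Finset.mem_singleton] at ht
    obtain ⟨hsN', hsk'⟩ := hsigma t ht.1 ht.2
    exact hBval _ hsN' hsk'
  exact h1.trans (le_csSup (mmsSet_bddAbove _ _ v ⟨c, Finset.mem_sdiff.2 ⟨hc.1, by simp [hc.2]⟩⟩) ⟨A', hA'part, rfl⟩)

theorem two_item_reduction_from_one (n m : ℕ) (hm : 2 ≤ m) (v : ℕ → ℕ → ℝ)
    (hgoods : GoodsInstance (Finset.Icc 1 n) (Finset.Icc 1 m) v)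
    (hord : OrderedGoods (Finset.Icc 1 n) (Finset.Icc 1 m) v)
    (i j : ℕ) (hi : i ∈ Finset.Icc 1 n) (hj : j ∈ Finset.Icc 1 m)
    (hval : mms (Finset.Icc 1 n) (Finset.Icc 1 m) (v i) ≤ v i j)
    (hothers : ∀ i' ∈ Finset.Icc 1 n, i' ≠ i →
      v i' j < mms (Finset.Icc 1 n) (Finset.Icc 1 m) (v i')) :
    ValidReduction (Finset.Icc 1 n) (Finset.Icc 1 m) v {i}
      {j, if j = m then m - 1 else m} := by
  set j' : ℕ := if j = m then m - 1 else m with hj'def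
  have hmM : m ∈ Finset.Icc 1 m := Finset.mem_Icc.2 ⟨by omega, le_refl m⟩
  have hm1M : m - 1 ∈ Finset.Icc 1 m := Finset.mem_Icc.2 ⟨by omega, by omega⟩
  have hj'M : j' ∈ Finset.Icc 1 m := by
    by_cases h : j = m <;> simp [hj'def, h, hmM, hm1M]
  have hjj' : j ≠ j' := by
    rw [Finset.mem_Icc] at hj
    by_cases h : j = m <;> simp [hj'def, h] <;> omega
  refine ⟨Finset.singleton_subset_iff.2 hi, ?_, ?_, ?_⟩
  · exact Finset.insert_subset hj (Finset.singleton_subset_iff.2 hj'M)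
  · refine ⟨fun _ => {j, j'}, ⟨?_, ?_, ?_⟩, ?_⟩
    · intro t _; exact Finset.Subset.refl _
    · intro a ha b hb hab
      rw [Finset.mem_singleton] at ha hb
      exact absurd (ha.trans hb.symm) hab
    · exact Finset.singleton_biUnion
    · intro t ht
      rw [Finset.mem_singleton] at ht; subst ht
      refine hval.trans ?_
      refine Finset.single_le_sum (f := fun g => v t g) ?_ (Finset.mem_insert_self j {j'})
      intro x hx
      rcases Finset.mem_insert.1 hx with h1 | h1
      · rw [h1]; exact hgoods t hi j hj
      · rw [Finset.mem_singleton] at h1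
        rw [h1]; exact hgoods t hi j' hj'M
  · intro i' hi'
    rw [Finset.mem_sdiff, Finset.mem_singleton] at hi'
    refine key _ _ (v i') (fun g hg => hgoods i' hi'.1 g hg) i j j' hi hj hj'M hjj' ?_
      ⟨i', Finset.mem_sdiff.2 ⟨hi'.1, by simp [hi'.2]⟩⟩ (hothers i' hi'.1 hi'.2)
    intro g hg hgj
    rw [Finset.mem_Icc] at hj
    have hg' := Finset.mem_Icc.1 hg
    by_cases h : j = m
    · have hh : j' = m - 1 := by simp [hj'def, h]
      rw [hh]
      exact hord i' hi'.1 g hg (m-1) hm1M (by omega)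
    · have hh : j' = m := by simp [hj'def, h]
      rw [hh]
      exact hord i' hi'.1 g hg m hmM hg'.2
end

section
/- In any goods instance, if there is a single allocation A that is an MMS partition of at least n − 1 of the n agents, then an MMS allocation exists. -/
open Finset

theorem identical_mms_partitions_allocation (n m : ℕ) (v : ℕ → ℕ → ℝ)
    (hgoods : GoodsInstance (Finset.Icc 1 n) (Finset.Icc 1 m) v)
    (A : ℕ → Finset ℕ)
    (hA : IsPartition (Finset.Icc 1 n) (Finset.Icc 1 m) A)
    (hmost : ∃ i₀ : ℕ, ∀ i ∈ Finset.Icc 1 n, i ≠ i₀ →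
      IsMMSPartition (Finset.Icc 1 n) (Finset.Icc 1 m) (v i) A) :
    ExistsMMSAllocation (Finset.Icc 1 n) (Finset.Icc 1 m) v := by
  set N := Finset.Icc 1 n with hN
  set M := Finset.Icc 1 m with hM
  obtain ⟨i₀, hmost⟩ := hmost
  by_cases hi₀ : i₀ ∈ N
  · have hNne : N.Nonempty := ⟨i₀, hi₀⟩
    obtain ⟨j', hj'N, hj'max⟩ :=
      N.exists_max_image (fun j => bval (v i₀) (A j)) hNne
    set c := bval (v i₀) (A j') with hc
    have hc0 : 0 ≤ c :=
      Finset.sum_nonneg fun g hg => hgoods i₀ hi₀ g (hA.1 j' hj'N hg)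
    have hsum : ∀ B : ℕ → Finset ℕ, IsPartition N M B →
        ∑ i ∈ N, bval (v i₀) (B i) = bval (v i₀) M := by
      intro B hB
      rw [bval, ← hB.2.2, Finset.sum_biUnion]
      · rfl
      · intro a ha b hb hab
        exact hB.2.1 a ha b hb hab
    have hmmsle : mms N M (v i₀) ≤ c := by
      apply Real.sSup_le _ hc0
      rintro x ⟨B, hB, rfl⟩
      set s := sInf ((fun i => bval (v i₀) (B i)) '' (N : Set ℕ)) with hs
      have hle : ∀ i ∈ N, s ≤ bval (v i₀) (B i) := by
        intro i hi
        exact csInf_le (Set.Finite.bddBelow (N.finite_toSet.image _)) ⟨i, hi, rfl⟩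
      have h1 : (N.card : ℝ) * s ≤ ∑ i ∈ N, bval (v i₀) (B i) := by
        calc (N.card : ℝ) * s = ∑ _i ∈ N, s := by
              rw [Finset.sum_const, nsmul_eq_mul]
          _ ≤ _ := Finset.sum_le_sum hle
      have h2 : ∑ i ∈ N, bval (v i₀) (A i) ≤ (N.card : ℝ) * c := by
        calc ∑ i ∈ N, bval (v i₀) (A i) ≤ ∑ _i ∈ N, c :=
              Finset.sum_le_sum fun i hi => hj'max i hi
          _ = (N.card : ℝ) * c := by rw [Finset.sum_const, nsmul_eq_mul]
      have heq : ∑ i ∈ N, bval (v i₀) (B i) = ∑ i ∈ N, bval (v i₀) (A i) := by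
        rw [hsum B hB, hsum A hA]
      have hcard : (0 : ℝ) < N.card := by
        exact_mod_cast Finset.card_pos.mpr hNne
      have : (N.card : ℝ) * s ≤ (N.card : ℝ) * c := by linarith
      exact le_of_mul_le_mul_left this hcard
    have hswapmem : ∀ b ∈ N, Equiv.swap i₀ j' b ∈ N := by
      intro b hb
      rw [Equiv.swap_apply_def]
      split_ifs <;> assumption
    set A' : ℕ → Finset ℕ := fun i => A (Equiv.swap i₀ j' i) with hA'
    have himg : N.image (Equiv.swap i₀ j') = N := by
      ext a
      simp only [Finset.mem_image]
      constructor
      · rintro ⟨b, hb, rfl⟩; exact hswapmem b hb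
      · intro ha
        exact ⟨Equiv.swap i₀ j' a, hswapmem a ha, Equiv.swap_apply_self _ _ _⟩
    have hpart : IsPartition N M A' := by
      refine ⟨fun i hi => hA.1 _ (hswapmem i hi), fun i hi j hj hij =>
        hA.2.1 _ (hswapmem i hi) _ (hswapmem j hj) ((Equiv.swap i₀ j').injective.ne hij), ?_⟩
      have : N.biUnion A' = (N.image (Equiv.swap i₀ j')).biUnion A := by
        ext g
        simp only [Finset.mem_biUnion, Finset.mem_image, hA']
        constructor
        · rintro ⟨a, ha, hg⟩; exact ⟨_, ⟨a, ha, rfl⟩, hg⟩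
        · rintro ⟨b, ⟨a, ha, rfl⟩, hg⟩; exact ⟨a, ha, hg⟩
      rw [this, himg, hA.2.2]
    refine ⟨A', hpart, fun i hi => ?_⟩
    by_cases hii : i = i₀
    · have hAi : A' i₀ = A j' := by
        simp [hA', Equiv.swap_apply_left]
      rw [hii, hAi]
      exact hmmsle
    · exact (hmost i hi hii).2 _ (hswapmem i hi)
  · exact ⟨A, hA, fun i hi =>
      (hmost i hi (by rintro rfl; exact hi₀ hi)).2 i hi⟩
end

section
/- In any ordered goods instance with m = n + c items for some integer c with n > c > 0, every agent i satisfies v_i(j) ≥ μ_i for every item j ∈ {1, 2, …, n − c}. -/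
open Finset

theorem goods_at_mms (n c : ℕ) (hc : 0 < c) (hcn : c < n) (v : ℕ → ℕ → ℝ)
    (hgoods : GoodsInstance (Finset.Icc 1 n) (Finset.Icc 1 (n + c)) v)
    (hord : OrderedGoods (Finset.Icc 1 n) (Finset.Icc 1 (n + c)) v) :
    ∀ i ∈ Finset.Icc 1 n, ∀ j ∈ Finset.Icc 1 (n - c),
      mms (Finset.Icc 1 n) (Finset.Icc 1 (n + c)) (v i) ≤ v i j := by

  intro i hi j hj
  simp only [Finset.mem_Icc] at hi hj
  have hiN : i ∈ Finset.Icc 1 n := by simp only [Finset.mem_Icc]; omega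
  have hjM : j ∈ Finset.Icc 1 (n + c) := by simp only [Finset.mem_Icc]; omega
  have h0 : 0 ≤ v i j := hgoods i hiN j hjM
  apply Real.sSup_le _ h0
  rintro x ⟨A, ⟨hsub, hdisj, hunion⟩, rfl⟩
  have key : ∃ k ∈ Finset.Icc 1 n, bval (v i) (A k) ≤ v i j := by
    by_cases hemp : ∃ k ∈ Finset.Icc 1 n, A k = ∅
    · obtain ⟨k, hk, he⟩ := hemp
      exact ⟨k, hk, by simp [bval, he, h0]⟩
    · push_neg at hemp
      have hcard : ∑ k ∈ Finset.Icc 1 n, (A k).card = n + c := by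
        rw [← Finset.card_biUnion (fun a ha b hb hab => hdisj a ha b hb hab), hunion]
        simp [Nat.card_Icc]
      set S := (Finset.Icc 1 n).filter (fun k => (A k).card = 1) with hSdef
      have hsplit := Finset.sum_filter_add_sum_filter_not (Finset.Icc 1 n)
        (fun k => (A k).card = 1) (fun k => (A k).card)
      rw [← hSdef] at hsplit
      have hSsum : ∑ k ∈ S, (A k).card = S.card := by
        rw [Finset.card_eq_sum_ones]
        apply Finset.sum_congr rfl
        intro k hk
        exact (Finset.mem_filter.mp hk).2
      have hbig : 2 * ((Finset.Icc 1 n).filter (fun k => ¬ (A k).card = 1)).card ≤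
          ∑ k ∈ (Finset.Icc 1 n).filter (fun k => ¬ (A k).card = 1), (A k).card := by
        rw [Finset.card_eq_sum_ones, Finset.mul_sum]
        apply Finset.sum_le_sum
        intro k hk
        obtain ⟨hk1, hk2⟩ := Finset.mem_filter.mp hk
        have h1 : 1 ≤ (A k).card :=
          Finset.card_pos.mpr (hemp k hk1)
        omega
      have hfc : S.card + ((Finset.Icc 1 n).filter (fun k => ¬ (A k).card = 1)).card = n := by
        rw [hSdef, Finset.card_filter_add_card_filter_not]
        simp [Nat.card_Icc]

      have hScard : n - c ≤ S.card := by omega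
      set S' := S.filter (fun k => A k ⊆ Finset.Icc 1 (j - 1)) with hS'def
      have hS'card : S'.card ≤ j - 1 := by
        have hdisj' : ∀ a ∈ S', ∀ b ∈ S', a ≠ b → Disjoint (A a) (A b) := by
          intro a ha b hb hab
          have ha' := Finset.mem_Icc.mp (Finset.mem_filter.mp (Finset.mem_filter.mp ha).1).1
          have hb' := Finset.mem_Icc.mp (Finset.mem_filter.mp (Finset.mem_filter.mp hb).1).1
          exact hdisj a (by simp only [Finset.mem_Icc]; omega) b
            (by simp only [Finset.mem_Icc]; omega) hab
        have hbu : S'.biUnion A ⊆ Finset.Icc 1 (j - 1) := by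
          intro g hg
          obtain ⟨k, hk, hgk⟩ := Finset.mem_biUnion.mp hg
          exact (Finset.mem_filter.mp hk).2 hgk
        have h1 := Finset.card_le_card hbu
        rw [Finset.card_biUnion hdisj'] at h1
        have h2 : ∑ k ∈ S', (A k).card = S'.card := by
          rw [Finset.card_eq_sum_ones]
          apply Finset.sum_congr rfl
          intro k hk
          exact (Finset.mem_filter.mp (Finset.mem_filter.mp hk).1).2
        rw [h2] at h1
        simpa [Nat.card_Icc] using h1
      have hne : (S \ S').Nonempty := by
        rw [← Finset.card_pos, Finset.card_sdiff_of_subset (hS'def ▸ Finset.filter_subset _ S)]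
        omega
      obtain ⟨k, hk⟩ := hne
      obtain ⟨hkS, hkS'⟩ := Finset.mem_sdiff.mp hk
      obtain ⟨hkN, hk1⟩ := Finset.mem_filter.mp hkS
      obtain ⟨g, hg⟩ := Finset.card_eq_one.mp hk1
      have hgM : g ∈ Finset.Icc 1 (n + c) :=
        hsub k hkN (hg ▸ Finset.mem_singleton_self g)
      have hgnot : ¬ ({g} : Finset ℕ) ⊆ Finset.Icc 1 (j - 1) := by
        intro hss
        exact hkS' (Finset.mem_filter.mpr ⟨hkS, hg ▸ hss⟩)
      have hjg : j ≤ g := by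
        have := Finset.mem_Icc.mp hgM
        by_contra hlt
        exact hgnot (Finset.singleton_subset_iff.mpr
          (Finset.mem_Icc.mpr ⟨this.1, by omega⟩))
      refine ⟨k, hkN, ?_⟩
      rw [hg]
      simpa [bval] using hord i hiN j hjM g hgM hjg
  obtain ⟨k, hk, hle⟩ := key
  have hfin : ((fun k => bval (v i) (A k)) '' ((Finset.Icc 1 n : Finset ℕ) : Set ℕ)).Finite :=
    (Finset.Icc 1 n).finite_toSet.image _
  calc sInf ((fun k => bval (v i) (A k)) '' ((Finset.Icc 1 n : Finset ℕ) : Set ℕ))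
      ≤ bval (v i) (A k) := csInf_le hfin.bddBelow ⟨k, Finset.mem_coe.mpr hk, rfl⟩
    _ ≤ v i j := hle
end

section
/- In any ordered goods instance, let B ⊆ M be a bundle with v_i(B) ≥ μ_i for some agent i. If every other agent i' ≠ i has an MMS partition containing a bundle B_{i'} with B_{i'} ⪰ B, then removing agent i together with the items of B (allocating B to i) is a valid reduction. -/
open Finset

lemma filter_card_le (B Aj : Finset ℕ) (f : ℕ → ℕ)
    (hinj : Set.InjOn f (B : Set ℕ)) (hf : ∀ g ∈ B, f g ∈ Aj ∧ f g ≤ g) (t : ℕ) :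
    ((B \ Aj).filter (· ≤ t)).card ≤ ((Aj \ B).filter (· ≤ t)).card := by
  have h1 : (B.filter (· ≤ t)).card ≤ (Aj.filter (· ≤ t)).card := by
    apply Finset.card_le_card_of_injOn f
    · intro g hg
      simp only [mem_coe, mem_filter] at hg ⊢
      exact ⟨(hf g hg.1).1, le_trans (hf g hg.1).2 hg.2⟩
    · exact fun a ha b hb => hinj (by simpa using (mem_filter.mp ha).1)
        (by simpa using (mem_filter.mp hb).1)
  have e1 : (B.filter (· ≤ t)).card
      = ((B \ Aj).filter (· ≤ t)).card + ((B ∩ Aj).filter (· ≤ t)).card := by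
    rw [← Finset.card_union_of_disjoint, ← Finset.filter_union, Finset.sdiff_union_inter]
    exact Finset.disjoint_filter_filter (Finset.disjoint_sdiff_inter B Aj)
  have e2 : (Aj.filter (· ≤ t)).card
      = ((Aj \ B).filter (· ≤ t)).card + ((B ∩ Aj).filter (· ≤ t)).card := by
    rw [Finset.inter_comm]
    rw [← Finset.card_union_of_disjoint, ← Finset.filter_union, Finset.sdiff_union_inter]
    exact Finset.disjoint_filter_filter (Finset.disjoint_sdiff_inter Aj B)
  omega

lemma hall_inj (B Aj : Finset ℕ) (f : ℕ → ℕ)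
    (hinj : Set.InjOn f (B : Set ℕ)) (hf : ∀ g ∈ B, f g ∈ Aj ∧ f g ≤ g) :
    ∃ G : ℕ → ℕ, Set.InjOn G ((B \ Aj : Finset ℕ) : Set ℕ) ∧
      ∀ g ∈ B \ Aj, G g ∈ Aj \ B ∧ G g ≤ g := by
  classical
  set t : (B \ Aj : Finset ℕ) → Finset ℕ := fun x => (Aj \ B).filter (· ≤ x.1) with ht
  have hall : ∀ s : Finset (B \ Aj : Finset ℕ), s.card ≤ (s.biUnion t).card := by
    intro s
    rcases s.eq_empty_or_nonempty with rfl | hs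
    · simp
    · set T := s.image (Subtype.val) with hT
      have hTne : T.Nonempty := hs.image _
      set t0 := T.max' hTne with ht0
      have hsub : T ⊆ (B \ Aj).filter (· ≤ t0) := by
        intro x hx
        rw [mem_filter]
        rcases Finset.mem_image.mp hx with ⟨y, hy, rfl⟩
        exact ⟨y.2, Finset.le_max' _ _ hx⟩
      have hsub2 : (Aj \ B).filter (· ≤ t0) ⊆ s.biUnion t := by
        intro x hx
        rw [Finset.mem_biUnion]
        rcases Finset.mem_image.mp (T.max'_mem hTne) with ⟨y, hy, hyv⟩
        exact ⟨y, hy, by rw [mem_filter] at hx ⊢; exact ⟨hx.1, by rw [hyv]; exact hx.2⟩⟩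
      calc s.card = T.card := (Finset.card_image_of_injective s Subtype.val_injective).symm
        _ ≤ ((B \ Aj).filter (· ≤ t0)).card := Finset.card_le_card hsub
        _ ≤ ((Aj \ B).filter (· ≤ t0)).card := filter_card_le B Aj f hinj hf t0
        _ ≤ (s.biUnion t).card := Finset.card_le_card hsub2
  rcases (Finset.all_card_le_biUnion_card_iff_exists_injective t).mp hall with ⟨g, hginj, hgt⟩
  refine ⟨fun x => if h : x ∈ B \ Aj then g ⟨x, h⟩ else x, ?_, ?_⟩
  · intro a ha b hb hab
    simp only [Finset.mem_coe] at ha hb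
    simp only [dif_pos ha, dif_pos hb] at hab
    exact Subtype.ext_iff.mp (hginj hab)
  · intro x hx
    simp only [dif_pos hx]
    have := hgt ⟨x, hx⟩
    rw [ht, mem_filter] at this
    exact this

lemma construct (N M : Finset ℕ) (v : ℕ → ℝ)
    (hpos : ∀ g ∈ M, 0 ≤ v g) (hord : ∀ g ∈ M, ∀ h ∈ M, g ≤ h → v h ≤ v g)
    (B : Finset ℕ) (hB : B ⊆ M) (A : ℕ → Finset ℕ) (hA : IsPartition N M A)
    (j : ℕ) (hj : j ∈ N)
    (f : ℕ → ℕ) (hfinj : Set.InjOn f (B : Set ℕ)) (hff : ∀ g ∈ B, f g ∈ A j ∧ f g ≤ g)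
    (i : ℕ) (hi : i ∈ N) (i' : ℕ) (hi' : i' ∈ N \ {i}) :
    ∃ C : ℕ → Finset ℕ, IsPartition (N \ {i}) (M \ B) C ∧
      ∀ k ∈ N \ {i}, ∃ k' ∈ N, bval v (A k') ≤ bval v (C k) := by
  classical
  obtain ⟨G, hG1, hG2⟩ := hall_inj B (A j) f hfinj hff
  obtain ⟨hAsub, hAdis, hAun⟩ := hA
  set τ : ℕ → ℕ := fun k => if k = j then i else k with hτdef
  have hτ : ∀ k ∈ N \ {i}, τ k ∈ N ∧ τ k ≠ j := by
    intro k hk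
    rw [Finset.mem_sdiff, Finset.mem_singleton] at hk
    by_cases h : k = j
    · subst h
      have : i ≠ k := fun h => hk.2 h.symm
      simp only [hτdef, if_pos rfl]
      exact ⟨hi, this⟩
    · simp only [hτdef, if_neg h]
      exact ⟨hk.1, h⟩
  have hτinj : ∀ k ∈ N \ {i}, ∀ k' ∈ N \ {i}, τ k = τ k' → k = k' := by
    intro k hk k' hk' he
    rw [Finset.mem_sdiff, Finset.mem_singleton] at hk hk'
    simp only [hτdef] at he
    by_cases h1 : k = j <;> by_cases h2 : k' = j
    · rw [h1, h2]
    · rw [if_pos h1, if_neg h2] at he; exact absurd he.symm hk'.2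
    · rw [if_neg h1, if_pos h2] at he; exact absurd he hk.2
    · rw [if_neg h1, if_neg h2] at he; exact he
  have hdisj : ∀ k ∈ N \ {i}, Disjoint (A (τ k)) (A j) := by
    intro k hk
    exact hAdis _ (hτ k hk).1 j hj (hτ k hk).2
  have hsubB : ∀ k ∈ N \ {i}, A (τ k) ∩ B ⊆ B \ A j := by
    intro k hk x hx
    rw [Finset.mem_inter] at hx
    rw [Finset.mem_sdiff]
    exact ⟨hx.2, fun hc => Finset.disjoint_left.mp (hdisj k hk) hx.1 hc⟩
  set L : Finset ℕ := (A j \ B) \ ((B \ A j).image G) with hLdef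
  set base : ℕ → Finset ℕ := fun k => (A (τ k) \ B) ∪ (A (τ k) ∩ B).image G with hbase
  set C : ℕ → Finset ℕ := fun k => base k ∪ (if k = i' then L else ∅) with hCdef
  -- membership characterization
  have hmem : ∀ k ∈ N \ {i}, ∀ x, x ∈ C k ↔
      (x ∈ A (τ k) ∧ x ∉ B) ∨ (∃ g ∈ A (τ k) ∩ B, G g = x) ∨ (k = i' ∧ x ∈ L) := by
    intro k hk x
    simp only [hCdef, hbase, Finset.mem_union, Finset.mem_sdiff, Finset.mem_image]
    constructor
    · rintro ((h | h) | h)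
      · exact Or.inl h
      · exact Or.inr (Or.inl h)
      · by_cases hki : k = i'
        · rw [if_pos hki] at h; exact Or.inr (Or.inr ⟨hki, h⟩)
        · rw [if_neg hki] at h; exact absurd h (Finset.notMem_empty x)
    · rintro (h | h | ⟨h1, h2⟩)
      · exact Or.inl (Or.inl h)
      · exact Or.inl (Or.inr h)
      · rw [if_pos h1]; exact Or.inr h2
  have hLsub : L ⊆ A j \ B := Finset.sdiff_subset
  have hCsub : ∀ k ∈ N \ {i}, C k ⊆ M \ B := by
    intro k hk x hx
    rw [hmem k hk] at hx
    rw [Finset.mem_sdiff]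
    rcases hx with ⟨h1, h2⟩ | ⟨g, hg, rfl⟩ | ⟨_, h2⟩
    · exact ⟨hAsub _ (hτ k hk).1 h1, h2⟩
    · have := hG2 g (hsubB k hk hg)
      rw [Finset.mem_sdiff] at this
      exact ⟨hAsub j hj this.1.1, this.1.2⟩
    · have := hLsub h2
      rw [Finset.mem_sdiff] at this
      exact ⟨hAsub j hj this.1, this.2⟩
  refine ⟨C, ⟨hCsub, ?_, ?_⟩, ?_⟩
  · -- pairwise disjoint
    intro k hk k' hk' hne
    rw [Finset.disjoint_left]
    intro x hx hx'
    rw [hmem k hk] at hx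
    rw [hmem k' hk'] at hx'
    have hττ : τ k ≠ τ k' := fun h => hne (hτinj k hk k' hk' h)
    have hdkk : Disjoint (A (τ k)) (A (τ k')) :=
      hAdis _ (hτ k hk).1 _ (hτ k' hk').1 hττ
    rcases hx with ⟨h1, h2⟩ | ⟨g, hg, rfl⟩ | ⟨hki, h2⟩ <;>
      rcases hx' with ⟨h1', h2'⟩ | ⟨g', hg', hge⟩ | ⟨hki', h2'⟩
    · exact Finset.disjoint_left.mp hdkk h1 h1'
    · have := hG2 g' (hsubB k' hk' hg')
      rw [Finset.mem_sdiff] at this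
      rw [← hge] at h1
      exact Finset.disjoint_left.mp (hdisj k hk) h1 this.1.1
    · have := hLsub h2'
      rw [Finset.mem_sdiff] at this
      exact Finset.disjoint_left.mp (hdisj k hk) h1 this.1
    · have := hG2 g (hsubB k hk hg)
      rw [Finset.mem_sdiff] at this
      rw [← Finset.mem_coe] at h1'
      exact Finset.disjoint_left.mp (hdisj k' hk') h1' this.1.1
    · have heq : g = g' := hG1 (hsubB k hk hg) (hsubB k' hk' hg') hge.symm
      subst heq
      rw [Finset.mem_inter] at hg hg'
      exact Finset.disjoint_left.mp hdkk hg.1 hg'.1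
    · rw [hLdef, Finset.mem_sdiff] at h2'
      exact h2'.2 (Finset.mem_image.mpr ⟨g, hsubB k hk hg, rfl⟩)
    · have := hLsub h2
      rw [Finset.mem_sdiff] at this
      exact Finset.disjoint_left.mp (hdisj k' hk') h1' this.1
    · rw [hLdef, Finset.mem_sdiff] at h2
      exact h2.2 (Finset.mem_image.mpr ⟨g', hsubB k' hk' hg', hge⟩)
    · exact hne (hki.trans hki'.symm)
  · -- union
    apply Finset.Subset.antisymm
    · intro x hx
      rw [Finset.mem_biUnion] at hx
      obtain ⟨k, hk, hxk⟩ := hx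
      exact hCsub k hk hxk
    · intro x hx
      rw [Finset.mem_sdiff] at hx
      rw [← hAun, Finset.mem_biUnion] at hx
      obtain ⟨⟨k0, hk0, hxk0⟩, hxB⟩ := hx
      rw [Finset.mem_biUnion]
      by_cases hk0j : k0 = j
      · subst hk0j
        by_cases him : x ∈ (B \ A k0).image G
        · obtain ⟨g, hg, hgx⟩ := Finset.mem_image.mp him
          have hgB : g ∈ B := (Finset.mem_sdiff.mp hg).1
          have hgM : g ∈ M := hB hgB
          rw [← hAun, Finset.mem_biUnion] at hgM
          obtain ⟨k1, hk1, hgk1⟩ := hgM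
          have hk1j : k1 ≠ k0 := by
            intro h; subst h; exact (Finset.mem_sdiff.mp hg).2 hgk1
          refine ⟨if k1 = i then k0 else k1, ?_, ?_⟩
          · rw [Finset.mem_sdiff, Finset.mem_singleton]
            by_cases h : k1 = i
            · rw [if_pos h]
              exact ⟨hk0, fun hc => hk1j (h.trans hc.symm)⟩
            · rw [if_neg h]; exact ⟨hk1, h⟩
          · have hτval : τ (if k1 = i then k0 else k1) = k1 := by
              by_cases h : k1 = i
              · subst h; simp [hτdef]
              · rw [if_neg h]; simp only [hτdef]; rw [if_neg hk1j]
            rw [hmem _ ?hmemin]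
            case hmemin =>
              rw [Finset.mem_sdiff, Finset.mem_singleton]
              by_cases h : k1 = i
              · rw [if_pos h]
                exact ⟨hk0, fun hc => hk1j (h.trans hc.symm)⟩
              · rw [if_neg h]; exact ⟨hk1, h⟩
            refine Or.inr (Or.inl ⟨g, ?_, hgx⟩)
            rw [hτval, Finset.mem_inter]
            exact ⟨hgk1, hgB⟩
        · refine ⟨i', hi', ?_⟩
          rw [hmem i' hi']
          refine Or.inr (Or.inr ⟨rfl, ?_⟩)
          rw [hLdef, Finset.mem_sdiff, Finset.mem_sdiff]
          exact ⟨⟨hxk0, hxB⟩, him⟩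
      · refine ⟨if k0 = i then j else k0, ?_, ?_⟩
        · rw [Finset.mem_sdiff, Finset.mem_singleton]
          by_cases h : k0 = i
          · rw [if_pos h]
            exact ⟨hj, fun hc => hk0j (h.trans hc.symm)⟩
          · rw [if_neg h]; exact ⟨hk0, h⟩
        · have hin : (if k0 = i then j else k0) ∈ N \ {i} := by
            rw [Finset.mem_sdiff, Finset.mem_singleton]
            by_cases h : k0 = i
            · rw [if_pos h]
              exact ⟨hj, fun hc => hk0j (h.trans hc.symm)⟩
            · rw [if_neg h]; exact ⟨hk0, h⟩
          rw [hmem _ hin]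
          have hτval : τ (if k0 = i then j else k0) = k0 := by
            by_cases h : k0 = i
            · subst h; simp [hτdef]
            · rw [if_neg h]; show (if k0 = j then i else k0) = k0
              rw [if_neg hk0j]
          rw [hτval]
          exact Or.inl ⟨hxk0, hxB⟩
  · -- values
    intro k hk
    refine ⟨τ k, (hτ k hk).1, ?_⟩
    have hdis1 : Disjoint (A (τ k) \ B) (A (τ k) ∩ B) := by
      rw [Finset.disjoint_left]
      intro x hx hx'
      exact (Finset.mem_sdiff.mp hx).2 (Finset.mem_inter.mp hx').2
    have hsplit : A (τ k) = (A (τ k) \ B) ∪ (A (τ k) ∩ B) := by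
      rw [Finset.sdiff_union_inter]
    have hdis2 : Disjoint (A (τ k) \ B) ((A (τ k) ∩ B).image G) := by
      rw [Finset.disjoint_left]
      intro x hx hx'
      obtain ⟨g, hg, rfl⟩ := Finset.mem_image.mp hx'
      have := hG2 g (hsubB k hk hg)
      rw [Finset.mem_sdiff] at this
      exact Finset.disjoint_left.mp (hdisj k hk) (Finset.mem_sdiff.mp hx).1 this.1.1
    have hAval : bval v (A (τ k)) =
        (∑ g ∈ A (τ k) \ B, v g) + ∑ g ∈ A (τ k) ∩ B, v g := by
      rw [bval]
      conv_lhs => rw [hsplit]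
      rw [Finset.sum_union hdis1]
    have himval : ∑ x ∈ (A (τ k) ∩ B).image G, v x = ∑ g ∈ A (τ k) ∩ B, v (G g) := by
      rw [Finset.sum_image]
      intro a ha b hb hab
      exact hG1 (hsubB k hk ha) (hsubB k hk hb) hab
    have hstep : ∀ g ∈ A (τ k) ∩ B, v g ≤ v (G g) := by
      intro g hg
      have hg' := hsubB k hk hg
      have h2 := hG2 g hg'
      have hgM : g ∈ M := hB (Finset.mem_sdiff.mp hg').1
      have hGM : G g ∈ M := hAsub j hj (Finset.mem_sdiff.mp h2.1).1
      exact hord (G g) hGM g hgM h2.2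
    have hbaseval : bval v (A (τ k)) ≤ bval v (base k) := by
      rw [hAval, hbase, bval, Finset.sum_union hdis2, himval]
      exact add_le_add le_rfl (Finset.sum_le_sum hstep)
    refine le_trans hbaseval ?_
    rw [bval, bval]
    apply Finset.sum_le_sum_of_subset_of_nonneg
    · rw [hCdef]; exact Finset.subset_union_left
    · intro g hg _
      exact hpos g (Finset.mem_sdiff.mp (hCsub k hk hg)).1

lemma mms_mono (N M : Finset ℕ) (v : ℕ → ℝ)
    (hpos : ∀ g ∈ M, 0 ≤ v g) (hord : ∀ g ∈ M, ∀ h ∈ M, g ≤ h → v h ≤ v g)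
    (B : Finset ℕ) (hB : B ⊆ M) (i : ℕ) (hi : i ∈ N) (i' : ℕ) (hi' : i' ∈ N \ {i})
    (A : ℕ → Finset ℕ) (hA : IsMMSPartition N M v A)
    (j : ℕ) (hj : j ∈ N) (hd : Dominates (A j) B) :
    mms N M v ≤ mms (N \ {i}) (M \ B) v := by
  classical
  obtain ⟨f, hfinj, hff⟩ := hd
  obtain ⟨C, hC, hCval⟩ :=
    construct N M v hpos hord B hB A hA.1 j hj f hfinj hff i hi i' hi'
  have hi'c : (i' : ℕ) ∈ ((N \ {i} : Finset ℕ) : Set ℕ) := Finset.mem_coe.mpr hi'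
  have hne : ((fun k => bval v (C k)) '' ((N \ {i} : Finset ℕ) : Set ℕ)).Nonempty :=
    ⟨_, ⟨i', hi'c, rfl⟩⟩
  have step1 : mms N M v ≤ sInf ((fun k => bval v (C k)) '' ((N \ {i} : Finset ℕ) : Set ℕ)) := by
    apply le_csInf hne
    rintro b ⟨k, hk, rfl⟩
    obtain ⟨k', hk', hle⟩ := hCval k (Finset.mem_coe.mp hk)
    exact le_trans (hA.2 k' hk') hle
  refine le_trans step1 ?_
  apply le_csSup
  · refine ⟨bval v (M \ B), ?_⟩
    rintro x ⟨D, hD, rfl⟩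
    have hfin : ((fun k => bval v (D k)) '' ((N \ {i} : Finset ℕ) : Set ℕ)).Finite :=
      ((N \ {i} : Finset ℕ)).finite_toSet.image _
    refine le_trans (csInf_le hfin.bddBelow ⟨i', hi'c, rfl⟩) ?_
    apply Finset.sum_le_sum_of_subset_of_nonneg (hD.1 i' hi')
    intro g hg _
    exact hpos g (Finset.mem_sdiff.mp hg).1
  · exact ⟨C, hC, rfl⟩

theorem domination_reduction (n m : ℕ) (v : ℕ → ℕ → ℝ)
    (hgoods : GoodsInstance (Finset.Icc 1 n) (Finset.Icc 1 m) v)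
    (hord : OrderedGoods (Finset.Icc 1 n) (Finset.Icc 1 m) v)
    (B : Finset ℕ) (hB : B ⊆ Finset.Icc 1 m)
    (i : ℕ) (hi : i ∈ Finset.Icc 1 n)
    (hval : mms (Finset.Icc 1 n) (Finset.Icc 1 m) (v i) ≤ bval (v i) B)
    (hdom : ∀ i' ∈ Finset.Icc 1 n, i' ≠ i →
      ∃ A : ℕ → Finset ℕ,
        IsMMSPartition (Finset.Icc 1 n) (Finset.Icc 1 m) (v i') A ∧
        ∃ j ∈ Finset.Icc 1 n, Dominates (A j) B) :
    ValidReduction (Finset.Icc 1 n) (Finset.Icc 1 m) v {i} B := by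
  refine ⟨Finset.singleton_subset_iff.mpr hi, hB, ⟨fun _ => B, ⟨?_, ?_, ?_⟩, ?_⟩, ?_⟩
  · intro k _; exact Finset.Subset.refl B
  · intro a ha b hb hab
    rw [Finset.mem_singleton] at ha hb
    exact absurd (ha.trans hb.symm) hab
  · exact Finset.singleton_biUnion
  · intro k hk
    rw [Finset.mem_singleton] at hk
    subst hk
    exact hval
  · intro i'' hi''
    have hmem2 := Finset.mem_sdiff.mp hi''
    have hne : i'' ≠ i := by simpa using hmem2.2
    obtain ⟨A, hA, j, hj, hd⟩ := hdom i'' hmem2.1 hne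
    exact mms_mono _ _ _ (hgoods i'' hmem2.1) (hord i'' hmem2.1) B hB i hi i'' hi'' A hA j hj hd
end

section
/- Let I be an ordered chores instance with m ≥ n + 1 items, and let i be an agent with an MMS partition A containing a bundle B with |B| = 2 and B ∩ {1, 2, …, n − 1} = ∅. Then i has an MMS partition A' such that (i) |A_j| = |A'_j| for every index j, (ii) {n, n + 1} is a bundle of A', and (iii) each of the chores 1, 2, …, n − 1 lies in the bundle with the same index in A and in A'. -/
open Finset

theorem size_two_bundle_chores (n m : ℕ) (hm : n + 1 ≤ m) (v : ℕ → ℕ → ℝ)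
    (hchores : ChoresInstance (Finset.Icc 1 n) (Finset.Icc 1 m) v)
    (hord : OrderedChores (Finset.Icc 1 n) (Finset.Icc 1 m) v)
    (i : ℕ) (hi : i ∈ Finset.Icc 1 n)
    (A : ℕ → Finset ℕ)
    (hA : IsMMSPartition (Finset.Icc 1 n) (Finset.Icc 1 m) (v i) A)
    (B : Finset ℕ) (hBmem : ∃ j ∈ Finset.Icc 1 n, A j = B)
    (hBcard : B.card = 2) (hBdisj : B ∩ Finset.Icc 1 (n - 1) = ∅) :
    ∃ A' : ℕ → Finset ℕ,
      IsMMSPartition (Finset.Icc 1 n) (Finset.Icc 1 m) (v i) A' ∧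
      (∀ j ∈ Finset.Icc 1 n, (A j).card = (A' j).card) ∧
      (∃ j ∈ Finset.Icc 1 n, A' j = ({n, n + 1} : Finset ℕ)) ∧
      (∀ g ∈ Finset.Icc 1 (n - 1), ∀ j ∈ Finset.Icc 1 n, (g ∈ A j ↔ g ∈ A' j)) := by

  classical
  set N := Finset.Icc 1 n with hN
  set M := Finset.Icc 1 m with hM
  obtain ⟨j0, hj0N, hj0B⟩ := hBmem
  obtain ⟨⟨hsub, hdisj, hun⟩, hmmsle⟩ := hA
  have hn1 : 1 ≤ n := le_trans (Finset.mem_Icc.mp hi).1 (Finset.mem_Icc.mp hi).2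
  -- get B = {a, b} with a < b
  obtain ⟨a, b, hab, hBab⟩ : ∃ a b, a < b ∧ B = {a, b} := by
    obtain ⟨x, y, hxy, hB⟩ := Finset.card_eq_two.mp hBcard
    rcases lt_or_gt_of_ne hxy with h | h
    · exact ⟨x, y, h, hB⟩
    · exact ⟨y, x, h, by rw [hB, Finset.pair_comm]⟩
  have haB : a ∈ B := by simp [hBab]
  have hbB : b ∈ B := by simp [hBab]
  have hBsub : B ⊆ M := hj0B ▸ hsub j0 hj0N
  have hnotlow : ∀ g ∈ B, n ≤ g := by
    intro g hg
    have hgM := hBsub hg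
    have h1 : ¬ (g ∈ Finset.Icc 1 (n-1)) := by
      intro h
      have : g ∈ B ∩ Finset.Icc 1 (n-1) := Finset.mem_inter.mpr ⟨hg, h⟩
      rw [hBdisj] at this
      exact absurd this (Finset.notMem_empty g)
    rw [Finset.mem_Icc] at hgM h1
    omega
  have han : n ≤ a := hnotlow a haB
  have hbn : n + 1 ≤ b := by have := hnotlow b hbB; omega
  have haM := hBsub haB
  have hbM := hBsub hbB
  have haMm : a ≤ m := (Finset.mem_Icc.mp haM).2
  have hbMm : b ≤ m := (Finset.mem_Icc.mp hbM).2
  have hnM : n ∈ M := Finset.mem_Icc.mpr ⟨hn1, by omega⟩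
  have hn1M : n + 1 ∈ M := Finset.mem_Icc.mpr ⟨by omega, hm⟩
  -- Step 1: mms ≤ v i n + v i (n+1), by pigeonhole on items 1..n+1
  have hmaps : ∀ g : ℕ, ∃ j, g ∈ Finset.Icc 1 (n+1) → (j ∈ N ∧ g ∈ A j) := by
    intro g
    by_cases hg : g ∈ Finset.Icc 1 (n+1)
    · have hgM : g ∈ M := by
        rw [Finset.mem_Icc] at hg ⊢; omega
      rw [← hun] at hgM
      obtain ⟨j, hjN, hgA⟩ := Finset.mem_biUnion.mp hgM
      exact ⟨j, fun _ => ⟨hjN, hgA⟩⟩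
    · exact ⟨0, fun h => absurd h hg⟩
  choose f hf using hmaps
  obtain ⟨g1, hg1, g2, hg2, hgne, hfeq⟩ :=
    Finset.exists_ne_map_eq_of_card_lt_of_maps_to
      (s := Finset.Icc 1 (n+1)) (t := N)
      (by simp [hN, Nat.card_Icc]) (fun g hg => (hf g hg).1)
  have hmmsnn : mms N M (v i) ≤ v i n + v i (n+1) := by
    set p := min g1 g2 with hp
    set q := max g1 g2 with hq
    have hpq : p < q := by
      rcases lt_or_gt_of_ne hgne with h | h <;> simp [hp, hq] <;> omega
    have hpC : p ∈ A (f g1) := by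
      rcases min_cases g1 g2 with ⟨h, _⟩ | ⟨h, _⟩
      · rw [hp, h]; exact (hf g1 hg1).2
      · rw [hp, h, hfeq]; exact (hf g2 hg2).2
    have hqC : q ∈ A (f g1) := by
      rcases max_cases g1 g2 with ⟨h, _⟩ | ⟨h, _⟩
      · rw [hq, h]; exact (hf g1 hg1).2
      · rw [hq, h, hfeq]; exact (hf g2 hg2).2
    have hpI : p ∈ Finset.Icc 1 (n+1) := by
      rcases min_cases g1 g2 with ⟨h, _⟩ | ⟨h, _⟩ <;> rw [hp, h] <;> assumption
    have hqI : q ∈ Finset.Icc 1 (n+1) := by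
      rcases max_cases g1 g2 with ⟨h, _⟩ | ⟨h, _⟩ <;> rw [hq, h] <;> assumption
    have hCsub : A (f g1) ⊆ M := hsub (f g1) (hf g1 hg1).1
    have hpM : p ∈ M := hCsub hpC
    have hqM : q ∈ M := hCsub hqC
    have hsubpq : ({p, q} : Finset ℕ) ⊆ A (f g1) := by
      intro x hx
      rcases Finset.mem_insert.mp hx with h | h
      · rwa [h]
      · rw [Finset.mem_singleton.mp h]; exact hqC
    have hsum : bval (v i) (A (f g1)) ≤ v i p + v i q := by
      have hsplit := Finset.sum_sdiff (f := v i) hsubpq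
      have hpair : ∑ x ∈ ({p, q} : Finset ℕ), v i x = v i p + v i q :=
        Finset.sum_pair (Nat.ne_of_lt hpq)
      have hneg : ∑ x ∈ A (f g1) \ {p, q}, v i x ≤ 0 := by
        apply Finset.sum_nonpos
        intro x hx
        exact hchores i hi x (hCsub (Finset.mem_sdiff.mp hx).1)
      unfold bval
      rw [← hsplit, hpair]
      linarith
    have hpn : v i p ≤ v i n := by
      apply hord i hi p hpM n hnM
      rw [Finset.mem_Icc] at hpI hqI; omega
    have hqn1 : v i q ≤ v i (n+1) := by
      apply hord i hi q hqM (n+1) hn1M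
      rw [Finset.mem_Icc] at hqI; omega
    have := hmmsle (f g1) (hf g1 hg1).1
    linarith
  -- the permutation
  set e : Equiv.Perm ℕ := (Equiv.swap a n).trans (Equiv.swap b (n+1)) with he
  have hbne_n : b ≠ n := by omega
  have hbne_n1' : n ≠ n + 1 := by omega
  have hea : e a = n := by
    rw [he, Equiv.trans_apply, Equiv.swap_apply_left,
      Equiv.swap_apply_of_ne_of_ne hbne_n.symm hbne_n1']
  have heb : e b = n + 1 := by
    rw [he, Equiv.trans_apply,
      Equiv.swap_apply_of_ne_of_ne (Nat.ne_of_gt hab) hbne_n, Equiv.swap_apply_left]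
  have hkey : ∀ g, g ∉ B → g ≤ e g ∧ (g ∈ M → e g ∈ M) := by
    intro g hgB
    have hga : g ≠ a := fun h => hgB (h ▸ haB)
    have hgb : g ≠ b := fun h => hgB (h ▸ hbB)
    by_cases hgn : g = n
    · rw [hgn, he, Equiv.trans_apply, Equiv.swap_apply_right]
      by_cases han1 : a = n + 1
      · rw [han1, Equiv.swap_apply_right]
        exact ⟨by omega, fun _ => hbM⟩
      · rw [Equiv.swap_apply_of_ne_of_ne (Nat.ne_of_lt hab) han1]
        exact ⟨han, fun _ => haM⟩
    · by_cases hgn1 : g = n + 1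
      · have hn1a : n + 1 ≠ a := by rw [← hgn1]; exact hga
        rw [hgn1, he, Equiv.trans_apply, Equiv.swap_apply_of_ne_of_ne hn1a (by omega),
          Equiv.swap_apply_right]
        exact ⟨by omega, fun _ => hbM⟩
      · rw [he, Equiv.trans_apply, Equiv.swap_apply_of_ne_of_ne hga hgn,
          Equiv.swap_apply_of_ne_of_ne hgb hgn1]
        exact ⟨le_refl g, fun h => h⟩
  have heM : ∀ g ∈ M, e g ∈ M := by
    intro g hg
    by_cases hgB : g ∈ B
    · rw [hBab] at hgB
      rcases Finset.mem_insert.mp hgB with h | h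
      · rw [h, hea]; exact hnM
      · rw [Finset.mem_singleton.mp h, heb]; exact hn1M
    · exact (hkey g hgB).2 hg
  have heinj : Function.Injective (fun x => e x) := e.injective
  set A' : ℕ → Finset ℕ := fun j => (A j).image (fun x => e x) with hA'
  have hA'sub : ∀ j ∈ N, A' j ⊆ M := by
    intro j hj x hx
    obtain ⟨y, hy, hyx⟩ := Finset.mem_image.mp hx
    rw [← hyx]
    exact heM y (hsub j hj hy)
  have hA'disj : ∀ j ∈ N, ∀ k ∈ N, j ≠ k → Disjoint (A' j) (A' k) := by
    intro j hj k hk hjk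
    exact (Finset.disjoint_image heinj).mpr (hdisj j hj k hk hjk)
  have himM : M.image (fun x => e x) = M := by
    apply Finset.eq_of_subset_of_card_le
    · intro x hx
      obtain ⟨y, hy, hyx⟩ := Finset.mem_image.mp hx
      rw [← hyx]; exact heM y hy
    · rw [Finset.card_image_of_injective _ heinj]
  have hA'un : N.biUnion A' = M := by
    have : N.biUnion A' = (N.biUnion A).image (fun x => e x) := by
      rw [Finset.biUnion_image]
    rw [this, hun, himM]
  have hA'j0 : A' j0 = ({n, n+1} : Finset ℕ) := by
    show (A j0).image (fun x => e x) = _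
    rw [hj0B, hBab, Finset.image_insert, Finset.image_singleton]
    simp only [hea, heb]
  have hBval : ∀ j ∈ N, j ≠ j0 → mms N M (v i) ≤ bval (v i) (A' j) := by
    intro j hj hjj0
    have hdisjB : Disjoint (A j) B := hj0B ▸ hdisj j hj j0 hj0N hjj0
    have hsumeq : bval (v i) (A' j) = ∑ g ∈ A j, v i (e g) := by
      unfold bval
      rw [hA']
      exact Finset.sum_image (fun x _ y _ h => heinj h)
    have hge : bval (v i) (A j) ≤ bval (v i) (A' j) := by
      rw [hsumeq]
      apply Finset.sum_le_sum
      intro g hg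
      have hgB : g ∉ B := Finset.disjoint_left.mp hdisjB hg
      have hgM : g ∈ M := hsub j hj hg
      obtain ⟨hle, hmem⟩ := hkey g hgB
      exact hord i hi g hgM (e g) (hmem hgM) hle
    exact le_trans (hmmsle j hj) hge
  refine ⟨A', ⟨⟨hA'sub, hA'disj, hA'un⟩, ?_⟩, ?_, ⟨j0, hj0N, hA'j0⟩, ?_⟩
  · intro j hj
    by_cases hjj0 : j = j0
    · subst hjj0
      rw [hA'j0]
      unfold bval
      rw [Finset.sum_pair hbne_n1']
      exact hmmsnn
    · exact hBval j hj hjj0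
  · intro j hj
    rw [hA', Finset.card_image_of_injective _ heinj]
  · intro g hg j hj
    have hgB : g ∉ B := by
      intro h
      have : g ∈ B ∩ Finset.Icc 1 (n-1) := Finset.mem_inter.mpr ⟨h, hg⟩
      rw [hBdisj] at this
      exact absurd this (Finset.notMem_empty g)
    have hga : g ≠ a := fun h => hgB (h ▸ haB)
    have hgb : g ≠ b := fun h => hgB (h ▸ hbB)
    have hglt : g < n := by
      have := Finset.mem_Icc.mp hg; omega
    have heg : e g = g := by
      rw [he, Equiv.trans_apply, Equiv.swap_apply_of_ne_of_ne hga (by omega),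
        Equiv.swap_apply_of_ne_of_ne hgb (by omega)]
    constructor
    · intro h
      rw [hA']
      rw [Finset.mem_image]
      exact ⟨g, h, heg⟩
    · intro h
      rw [hA', Finset.mem_image] at h
      obtain ⟨x, hx, hxg⟩ := h
      have : x = g := heinj (by simpa [heg] using hxg)
      rwa [← this]
end

section
/- Let I be an ordered chores instance with n agents and m = n + c chores, where n > c > 0. If an agent i has an MMS partition containing a bundle of size k ≥ 2, then i has an MMS partition that contains at least n − (c − k + 2) bundles of cardinality one. -/
open Finset

lemma bval_mono_chores {v : ℕ → ℝ} {S T : Finset ℕ} (hST : S ⊆ T)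
    (hv : ∀ g ∈ T, v g ≤ 0) : bval v T ≤ bval v S := by
  unfold bval
  rw [← Finset.sum_sdiff hST]
  have h1 : ∑ g ∈ T \ S, v g ≤ 0 :=
    Finset.sum_nonpos (fun g hg => hv g (Finset.mem_sdiff.mp hg).1)
  linarith

lemma card_filter_le_card_biUnion (J : Finset ℕ) (P : ℕ → Finset ℕ)
    (hdisj : ∀ a ∈ J, ∀ b ∈ J, a ≠ b → Disjoint (P a) (P b)) :
    (J.filter (fun j => (P j).Nonempty)).card ≤ (J.biUnion P).card := by
  rw [Finset.card_biUnion hdisj]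
  calc (J.filter (fun j => (P j).Nonempty)).card
      = ∑ j ∈ J.filter (fun j => (P j).Nonempty), 1 := by simp
    _ ≤ ∑ j ∈ J.filter (fun j => (P j).Nonempty), (P j).card :=
        Finset.sum_le_sum (fun j hj => Finset.card_pos.mpr (Finset.mem_filter.mp hj).2)
    _ ≤ ∑ j ∈ J, (P j).card :=
        Finset.sum_le_sum_of_subset (Finset.filter_subset _ _)

lemma fill_lemma : ∀ (q : ℕ) (N' T J : Finset ℕ) (P : ℕ → Finset ℕ),
    N'.card = q →
    (∀ a ∈ J, ∀ b ∈ J, a ≠ b → Disjoint (P a) (P b)) →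
    J.biUnion P = T →
    (J.filter (fun j => (P j).Nonempty)).card ≤ q →
    q ≤ T.card →
    ∃ B : ℕ → Finset ℕ, IsPartition N' T B ∧ (∀ j ∈ N', (B j).Nonempty) ∧
      ∀ j ∈ N', ∃ j' ∈ J, B j ⊆ P j' := by
  intro q
  induction q with
  | zero =>
    intro N' T J P hcard hdisj hcover hfilter hT
    have hN' : N' = ∅ := Finset.card_eq_zero.mp hcard
    have hPempty : ∀ j ∈ J, P j = ∅ := by
      intro j hj
      by_contra h
      have : j ∈ J.filter (fun j => (P j).Nonempty) :=
        Finset.mem_filter.mpr ⟨hj, Finset.nonempty_iff_ne_empty.mpr h⟩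
      have := Finset.card_pos.mpr ⟨j, this⟩
      omega
    have hTempty : T = ∅ := by
      rw [← hcover]
      ext y
      simp only [Finset.mem_biUnion, Finset.notMem_empty, iff_false]
      rintro ⟨a, ha, hy⟩
      rw [hPempty a ha] at hy
      exact Finset.notMem_empty y hy
    refine ⟨fun _ => ∅, ⟨?_, ?_, ?_⟩, ?_, ?_⟩ <;> simp [hN', hTempty]
  | succ q ih =>
    intro N' T J P hcard hdisj hcover hfilter hT
    obtain ⟨jsel, hjsel⟩ : N'.Nonempty := Finset.card_pos.mp (by omega)
    by_cases hfq : (J.filter (fun j => (P j).Nonempty)).card ≤ q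
    · -- single element move
      have hex : ∃ j' ∈ J, 2 ≤ (P j').card := by
        by_contra h
        push_neg at h
        have hle : ∀ j' ∈ J, (P j').card ≤ 1 := fun j' hj' => by
          have := h j' hj'; omega
        have : T.card ≤ q := by
          rw [← hcover, Finset.card_biUnion hdisj]
          calc ∑ j' ∈ J, (P j').card
              = ∑ j' ∈ J.filter (fun j => (P j).Nonempty), (P j').card := by
                rw [Finset.sum_filter_of_ne]
                intro x hx hne
                exact Finset.card_pos.mp (Nat.pos_of_ne_zero hne)
            _ ≤ ∑ j' ∈ J.filter (fun j => (P j).Nonempty), 1 :=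
                Finset.sum_le_sum (fun j' hj' => hle j' (Finset.mem_filter.mp hj').1)
            _ = (J.filter (fun j => (P j).Nonempty)).card := by simp
            _ ≤ q := hfq
        omega
      obtain ⟨j', hj'J, hj'2⟩ := hex
      obtain ⟨x, hx⟩ : (P j').Nonempty := Finset.card_pos.mp (by omega)
      have hxT : x ∈ T := by
        rw [← hcover]; exact Finset.mem_biUnion.mpr ⟨j', hj'J, hx⟩
      set P' : ℕ → Finset ℕ := Function.update P j' ((P j').erase x) with hP'
      have hP'sub : ∀ a, P' a ⊆ P a := by
        intro a
        by_cases ha : a = j'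
        · subst ha; simp [hP']; exact Finset.erase_subset _ _
        · simp [hP', Function.update_of_ne ha]
      have hdisj' : ∀ a ∈ J, ∀ b ∈ J, a ≠ b → Disjoint (P' a) (P' b) :=
        fun a ha b hb hab => (hdisj a ha b hb hab).mono (hP'sub a) (hP'sub b)
      have hcover' : J.biUnion P' = T.erase x := by
        ext y
        simp only [Finset.mem_biUnion, Finset.mem_erase]
        constructor
        · rintro ⟨a, haJ, hy⟩
          constructor
          · intro hyx
            subst hyx
            by_cases ha : a = j'
            · subst ha; simp [hP'] at hy
            · rw [hP', Function.update_of_ne ha] at hy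
              exact (Finset.disjoint_left.mp (hdisj a haJ j' hj'J ha) hy) hx
          · rw [← hcover]; exact Finset.mem_biUnion.mpr ⟨a, haJ, hP'sub a hy⟩
        · rintro ⟨hyx, hyT⟩
          rw [← hcover] at hyT
          obtain ⟨a, haJ, hy⟩ := Finset.mem_biUnion.mp hyT
          refine ⟨a, haJ, ?_⟩
          by_cases ha : a = j'
          · subst ha; simp [hP']; exact ⟨hyx, hy⟩
          · rwa [hP', Function.update_of_ne ha]
      have hfilter' : (J.filter (fun j => (P' j).Nonempty)).card ≤ q := by
        have : J.filter (fun j => (P' j).Nonempty) = J.filter (fun j => (P j).Nonempty) := by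
          apply Finset.filter_congr
          intro a haJ
          by_cases ha : a = j'
          · subst ha
            simp only [hP', Function.update_self]
            constructor
            · intro _; exact ⟨x, hx⟩
            · intro _; apply Finset.card_pos.mp
              rw [Finset.card_erase_of_mem hx]; omega
          · rw [hP', Function.update_of_ne ha]
        rw [this]; exact hfq
      have hT' : q ≤ (T.erase x).card := by
        rw [Finset.card_erase_of_mem hxT]; omega
      obtain ⟨B', ⟨hB'sub, hB'disj, hB'cov⟩, hB'ne, hB'src⟩ :=
        ih (N'.erase jsel) (T.erase x) J P' (by rw [Finset.card_erase_of_mem hjsel]; omega)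
          hdisj' hcover' hfilter' hT'
      refine ⟨fun a => if a = jsel then {x} else B' a, ⟨?_, ?_, ?_⟩, ?_, ?_⟩
      · intro a ha
        by_cases haj : a = jsel
        · simp [haj, Finset.singleton_subset_iff, hxT]
        · simp only [if_neg haj]
          exact (hB'sub a (Finset.mem_erase.mpr ⟨haj, ha⟩)).trans (Finset.erase_subset _ _)
      · intro a ha b hb hab
        by_cases haj : a = jsel
        · have hbj : b ≠ jsel := fun h => hab (haj.trans h.symm)
          simp only [if_pos haj, if_neg hbj]
          rw [Finset.disjoint_singleton_left]
          intro hxB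
          exact (Finset.mem_erase.mp (hB'sub b (Finset.mem_erase.mpr ⟨hbj, hb⟩) hxB)).1 rfl
        · by_cases hbj : b = jsel
          · simp only [if_neg haj, if_pos hbj]
            rw [Finset.disjoint_singleton_right]
            intro hxB
            exact (Finset.mem_erase.mp (hB'sub a (Finset.mem_erase.mpr ⟨haj, ha⟩) hxB)).1 rfl
          · simp only [if_neg haj, if_neg hbj]
            exact hB'disj a (Finset.mem_erase.mpr ⟨haj, ha⟩) b (Finset.mem_erase.mpr ⟨hbj, hb⟩) hab
      · rw [← Finset.insert_erase hjsel, Finset.biUnion_insert]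
        have : (N'.erase jsel).biUnion (fun a => if a = jsel then {x} else B' a)
            = (N'.erase jsel).biUnion B' := by
          apply Finset.biUnion_congr rfl
          intro a ha
          rw [if_neg (Finset.mem_erase.mp ha).1]
        rw [this, hB'cov, if_pos rfl]
        exact Finset.insert_erase hxT
      · intro a ha
        by_cases haj : a = jsel
        · simp [haj]
        · simp only [if_neg haj]
          exact hB'ne a (Finset.mem_erase.mpr ⟨haj, ha⟩)
      · intro a ha
        by_cases haj : a = jsel
        · refine ⟨j', hj'J, ?_⟩
          simp [haj, Finset.singleton_subset_iff, hx]
        · obtain ⟨j'', hj''J, hsub⟩ := hB'src a (Finset.mem_erase.mpr ⟨haj, ha⟩)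
          refine ⟨j'', hj''J, ?_⟩
          simp only [if_neg haj]
          exact hsub.trans (hP'sub j'')
    · -- whole part move
      have hfcard : (J.filter (fun j => (P j).Nonempty)).card = q + 1 := by omega
      obtain ⟨j', hj'f⟩ : (J.filter (fun j => (P j).Nonempty)).Nonempty :=
        Finset.card_pos.mp (by omega)
      obtain ⟨hj'J, hj'ne⟩ := Finset.mem_filter.mp hj'f
      have hPsubT : P j' ⊆ T := by
        rw [← hcover]; exact Finset.subset_biUnion_of_mem P hj'J
      have hcover' : (J.erase j').biUnion P = T \ P j' := by
        ext y
        simp only [Finset.mem_biUnion, Finset.mem_sdiff, Finset.mem_erase]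
        constructor
        · rintro ⟨a, ⟨haj', haJ⟩, hy⟩
          refine ⟨?_, ?_⟩
          · rw [← hcover]; exact Finset.mem_biUnion.mpr ⟨a, haJ, hy⟩
          · exact fun hyP => Finset.disjoint_left.mp (hdisj a haJ j' hj'J haj') hy hyP
        · rintro ⟨hyT, hyP⟩
          rw [← hcover] at hyT
          obtain ⟨a, haJ, hy⟩ := Finset.mem_biUnion.mp hyT
          exact ⟨a, ⟨fun h => hyP (h ▸ hy), haJ⟩, hy⟩
      have hfilter' : ((J.erase j').filter (fun j => (P j).Nonempty)).card ≤ q := by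
        rw [Finset.filter_erase, Finset.card_erase_of_mem hj'f, hfcard]; omega
      have hdisj' : ∀ a ∈ J.erase j', ∀ b ∈ J.erase j', a ≠ b → Disjoint (P a) (P b) :=
        fun a ha b hb hab =>
          hdisj a (Finset.mem_of_mem_erase ha) b (Finset.mem_of_mem_erase hb) hab
      have hT' : q ≤ (T \ P j').card := by
        rw [← hcover']
        calc q = ((J.erase j').filter (fun j => (P j).Nonempty)).card := by
              rw [Finset.filter_erase, Finset.card_erase_of_mem hj'f, hfcard]; omega
          _ ≤ ((J.erase j').biUnion P).card := card_filter_le_card_biUnion _ _ hdisj'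
      obtain ⟨B', ⟨hB'sub, hB'disj, hB'cov⟩, hB'ne, hB'src⟩ :=
        ih (N'.erase jsel) (T \ P j') (J.erase j') P (by rw [Finset.card_erase_of_mem hjsel]; omega)
          hdisj' hcover' hfilter' hT'
      refine ⟨fun a => if a = jsel then P j' else B' a, ⟨?_, ?_, ?_⟩, ?_, ?_⟩
      · intro a ha
        by_cases haj : a = jsel
        · simp only [if_pos haj]; exact hPsubT
        · simp only [if_neg haj]
          exact (hB'sub a (Finset.mem_erase.mpr ⟨haj, ha⟩)).trans (Finset.sdiff_subset)
      · intro a ha b hb hab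
        by_cases haj : a = jsel
        · have hbj : b ≠ jsel := fun h => hab (haj.trans h.symm)
          simp only [if_pos haj, if_neg hbj]
          exact Finset.disjoint_left.mpr (fun y hy hyB =>
            (Finset.mem_sdiff.mp (hB'sub b (Finset.mem_erase.mpr ⟨hbj, hb⟩) hyB)).2 hy)
        · by_cases hbj : b = jsel
          · simp only [if_neg haj, if_pos hbj]
            exact Finset.disjoint_right.mpr (fun y hy hyB =>
              (Finset.mem_sdiff.mp (hB'sub a (Finset.mem_erase.mpr ⟨haj, ha⟩) hyB)).2 hy)
          · simp only [if_neg haj, if_neg hbj]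
            exact hB'disj a (Finset.mem_erase.mpr ⟨haj, ha⟩) b (Finset.mem_erase.mpr ⟨hbj, hb⟩) hab
      · rw [← Finset.insert_erase hjsel, Finset.biUnion_insert]
        have : (N'.erase jsel).biUnion (fun a => if a = jsel then P j' else B' a)
            = (N'.erase jsel).biUnion B' := by
          apply Finset.biUnion_congr rfl
          intro a ha
          rw [if_neg (Finset.mem_erase.mp ha).1]
        rw [this, hB'cov, if_pos rfl]
        exact Finset.union_sdiff_of_subset hPsubT
      · intro a ha
        by_cases haj : a = jsel
        · simp only [if_pos haj]; exact hj'ne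
        · simp only [if_neg haj]
          exact hB'ne a (Finset.mem_erase.mpr ⟨haj, ha⟩)
      · intro a ha
        by_cases haj : a = jsel
        · exact ⟨j', hj'J, by simp [haj]⟩
        · obtain ⟨j'', hj''J, hsub⟩ := hB'src a (Finset.mem_erase.mpr ⟨haj, ha⟩)
          exact ⟨j'', Finset.mem_of_mem_erase hj''J, by simp only [if_neg haj]; exact hsub⟩

lemma count_singletons (N M : Finset ℕ) (A : ℕ → Finset ℕ)
    (hpart : IsPartition N M A) (hne : ∀ j ∈ N, (A j).Nonempty)
    (j0 : ℕ) (hj0 : j0 ∈ N) (t : ℕ) (ht2 : 2 ≤ t) (ht : t ≤ (A j0).card) :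
    2 * N.card + t ≤ M.card + (N.filter (fun j => (A j).card = 1)).card + 2 := by
  obtain ⟨hsub, hdisj, hcov⟩ := hpart
  have hM : M.card = ∑ j ∈ N, (A j).card := by
    rw [← hcov, Finset.card_biUnion hdisj]
  set S := N.filter (fun j => (A j).card = 1) with hS
  have hj0S : j0 ∉ S := by
    intro h
    have := (Finset.mem_filter.mp h).2
    omega
  have hSsub : S ⊆ N.erase j0 := by
    intro a ha
    exact Finset.mem_erase.mpr ⟨fun h => hj0S (h ▸ ha), (Finset.mem_filter.mp ha).1⟩
  have hsplit : ∑ j ∈ N, (A j).card = (A j0).card + ∑ j ∈ N.erase j0, (A j).card :=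
    (Finset.add_sum_erase N (fun j => (A j).card) hj0).symm
  have hsplit2 : ∑ j ∈ N.erase j0, (A j).card
      = ∑ j ∈ (N.erase j0) \ S, (A j).card + ∑ j ∈ S, (A j).card :=
    (Finset.sum_sdiff hSsub).symm
  have hSsum : ∑ j ∈ S, (A j).card = S.card := by
    rw [Finset.card_eq_sum_ones S]
    exact Finset.sum_congr rfl (fun j hj => (Finset.mem_filter.mp hj).2)
  have hbig : ((N.erase j0) \ S).card * 2 ≤ ∑ j ∈ (N.erase j0) \ S, (A j).card := by
    have h2 : ∀ j ∈ (N.erase j0) \ S, 2 ≤ (A j).card := by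
      intro j hj
      obtain ⟨hje, hjS⟩ := Finset.mem_sdiff.mp hj
      obtain ⟨hjne, hjN⟩ := Finset.mem_erase.mp hje
      have h1 : 1 ≤ (A j).card := Finset.card_pos.mpr (hne j hjN)
      have hne1 : (A j).card ≠ 1 := fun h => hjS (Finset.mem_filter.mpr ⟨hjN, h⟩)
      omega
    calc ((N.erase j0) \ S).card * 2 = ((N.erase j0) \ S).card • 2 := by
          rw [smul_eq_mul]
      _ ≤ ∑ j ∈ (N.erase j0) \ S, (A j).card := Finset.card_nsmul_le_sum _ _ _ h2
  have hc1 : ((N.erase j0) \ S).card = (N.erase j0).card - S.card :=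
    Finset.card_sdiff_of_subset hSsub
  have hc2 : (N.erase j0).card = N.card - 1 := Finset.card_erase_of_mem hj0
  have hc3 : S.card ≤ (N.erase j0).card := Finset.card_le_card hSsub
  have hc4 : 1 ≤ N.card := Finset.card_pos.mpr ⟨j0, hj0⟩
  omega

theorem number_of_single_bundles_chores (n c : ℕ) (hc : 0 < c) (hcn : c < n)
    (v : ℕ → ℕ → ℝ)
    (hchores : ChoresInstance (Finset.Icc 1 n) (Finset.Icc 1 (n + c)) v)
    (hord : OrderedChores (Finset.Icc 1 n) (Finset.Icc 1 (n + c)) v)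
    (i : ℕ) (hi : i ∈ Finset.Icc 1 n)
    (k : ℕ) (hk : 2 ≤ k)
    (A : ℕ → Finset ℕ)
    (hA : IsMMSPartition (Finset.Icc 1 n) (Finset.Icc 1 (n + c)) (v i) A)
    (hbundle : ∃ j ∈ Finset.Icc 1 n, (A j).card = k) :
    ∃ A' : ℕ → Finset ℕ,
      IsMMSPartition (Finset.Icc 1 n) (Finset.Icc 1 (n + c)) (v i) A' ∧
      ∃ S ⊆ Finset.Icc 1 n, n - (c - k + 2) ≤ S.card ∧ ∀ j ∈ S, (A' j).card = 1 := by
  classical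
  obtain ⟨⟨hAsub, hAdisj, hAcov⟩, hAmms⟩ := hA
  obtain ⟨j0, hj0, hj0card⟩ := hbundle
  set N := Finset.Icc 1 n with hN
  set M := Finset.Icc 1 (n + c) with hM
  have hNcard : N.card = n := by rw [hN, Nat.card_Icc]; omega
  have hMcard : M.card = n + c := by rw [hM, Nat.card_Icc]; omega
  set t := min k (c + 1) with hts
  have ht2 : 2 ≤ t := by omega
  have htk : t ≤ k := min_le_left _ _
  have htc : t ≤ c + 1 := min_le_right _ _
  have key : ∀ A' : ℕ → Finset ℕ, IsPartition N M A' →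
      (∀ j ∈ N, ∃ j' ∈ N, A' j ⊆ A j') →
      IsMMSPartition N M (v i) A' := by
    intro A' hpart hsrc
    refine ⟨hpart, fun j hj => ?_⟩
    obtain ⟨j', hj', hsub⟩ := hsrc j hj
    refine le_trans (hAmms j' hj') (bval_mono_chores hsub ?_)
    intro g hg
    exact hchores i hi g (hAsub j' hj' hg)
  have countS : ∀ A' : ℕ → Finset ℕ, IsPartition N M A' → (∀ j ∈ N, (A' j).Nonempty) →
      (∃ j1 ∈ N, t ≤ (A' j1).card) →
      n - (c - k + 2) ≤ (N.filter (fun j => (A' j).card = 1)).card := by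
    rintro A' hpart hne ⟨j1, hj1, hj1c⟩
    have := count_singletons N M A' hpart hne j1 hj1 t ht2 hj1c
    rw [hNcard, hMcard] at this
    omega
  by_cases hcase : (∀ j ∈ N, (A j).Nonempty) ∧ c + 2 ≤ k
  · refine ⟨A, ⟨⟨hAsub, hAdisj, hAcov⟩, hAmms⟩,
      N.filter (fun j => (A j).card = 1), Finset.filter_subset _ _, ?_, ?_⟩
    · exact countS A ⟨hAsub, hAdisj, hAcov⟩ hcase.1 ⟨j0, hj0, by omega⟩
    · intro j hjS; exact (Finset.mem_filter.mp hjS).2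
  · obtain ⟨R, hRsub, hRcard⟩ := Finset.exists_subset_card_eq
      (show t ≤ (A j0).card by rw [hj0card]; exact htk)
    have hRM : R ⊆ M := hRsub.trans (hAsub j0 hj0)
    have hj1ex : ∃ j1 ∈ N, A j1 \ R = ∅ := by
      rcases not_and_or.mp hcase with h | h
      · push_neg at h
        obtain ⟨j1, hj1N, hj1e⟩ := h
        refine ⟨j1, hj1N, ?_⟩
        rw [hj1e]
        exact Finset.empty_sdiff _
      · have hkc : k ≤ c + 1 := by omega
        have hRA : R = A j0 := Finset.eq_of_subset_of_card_le hRsub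
          (by rw [hj0card, hRcard]; omega)
        exact ⟨j0, hj0, by rw [hRA]; exact Finset.sdiff_self _⟩
    obtain ⟨j1, hj1N, hj1e⟩ := hj1ex
    have hdisjP : ∀ a ∈ N, ∀ b ∈ N, a ≠ b → Disjoint (A a \ R) (A b \ R) :=
      fun a ha b hb hab =>
        (hAdisj a ha b hb hab).mono Finset.sdiff_subset Finset.sdiff_subset
    have hcovP : N.biUnion (fun j => A j \ R) = M \ R := by
      ext y
      simp only [Finset.mem_biUnion, Finset.mem_sdiff]
      constructor
      · rintro ⟨a, ha, hy, hyR⟩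
        exact ⟨by rw [← hAcov]; exact Finset.mem_biUnion.mpr ⟨a, ha, hy⟩, hyR⟩
      · rintro ⟨hyM, hyR⟩
        rw [← hAcov] at hyM
        obtain ⟨a, ha, hy⟩ := Finset.mem_biUnion.mp hyM
        exact ⟨a, ha, hy, hyR⟩
    have hfilterP : (N.filter (fun j => (A j \ R).Nonempty)).card ≤ n - 1 := by
      have hsubf : N.filter (fun j => (A j \ R).Nonempty) ⊆ N.erase j1 := by
        intro a ha
        obtain ⟨haN, hane⟩ := Finset.mem_filter.mp ha
        refine Finset.mem_erase.mpr ⟨?_, haN⟩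
        intro h
        rw [h, hj1e] at hane
        exact Finset.not_nonempty_empty hane
      calc (N.filter (fun j => (A j \ R).Nonempty)).card
          ≤ (N.erase j1).card := Finset.card_le_card hsubf
        _ = n - 1 := by rw [Finset.card_erase_of_mem hj1N, hNcard]
    have hTcard : n - 1 ≤ (M \ R).card := by
      rw [Finset.card_sdiff_of_subset hRM, hMcard, hRcard]
      omega
    have hNerase : (N.erase j0).card = n - 1 := by
      rw [Finset.card_erase_of_mem hj0, hNcard]
    obtain ⟨B, ⟨hBsub, hBdisj, hBcov⟩, hBne, hBsrc⟩ :=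
      fill_lemma (n - 1) (N.erase j0) (M \ R) N (fun j => A j \ R)
        hNerase hdisjP hcovP hfilterP hTcard
    set A' := fun j => if j = j0 then R else B j with hA'
    have hA'val : ∀ j, j ≠ j0 → A' j = B j := by
      intro j hj; rw [hA']; simp [hj]
    have hA'j0 : A' j0 = R := by rw [hA']; simp
    have hA'part : IsPartition N M A' := by
      refine ⟨?_, ?_, ?_⟩
      · intro a ha
        by_cases haj : a = j0
        · rw [haj, hA'j0]; exact hRM
        · rw [hA'val a haj]
          exact (hBsub a (Finset.mem_erase.mpr ⟨haj, ha⟩)).trans Finset.sdiff_subset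
      · intro a ha b hb hab
        by_cases haj : a = j0
        · have hbj : b ≠ j0 := fun h => hab (haj.trans h.symm)
          rw [haj, hA'j0, hA'val b hbj]
          exact (Finset.disjoint_sdiff.mono_right
            (hBsub b (Finset.mem_erase.mpr ⟨hbj, hb⟩)))
        · by_cases hbj : b = j0
          · rw [hbj, hA'j0, hA'val a haj]
            exact (Finset.disjoint_sdiff.mono_right
              (hBsub a (Finset.mem_erase.mpr ⟨haj, ha⟩))).symm
          · rw [hA'val a haj, hA'val b hbj]
            exact hBdisj a (Finset.mem_erase.mpr ⟨haj, ha⟩)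
              b (Finset.mem_erase.mpr ⟨hbj, hb⟩) hab
      · rw [← Finset.insert_erase hj0, Finset.biUnion_insert, hA'j0]
        have : (N.erase j0).biUnion A' = (N.erase j0).biUnion B :=
          Finset.biUnion_congr rfl (fun a ha => hA'val a (Finset.mem_erase.mp ha).1)
        rw [this, hBcov]
        exact Finset.union_sdiff_of_subset hRM
    have hA'src : ∀ j ∈ N, ∃ j' ∈ N, A' j ⊆ A j' := by
      intro a ha
      by_cases haj : a = j0
      · exact ⟨j0, hj0, by rw [haj, hA'j0]; exact hRsub⟩
      · obtain ⟨j', hj'N, hsub⟩ := hBsrc a (Finset.mem_erase.mpr ⟨haj, ha⟩)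
        exact ⟨j', hj'N, by rw [hA'val a haj]; exact hsub.trans Finset.sdiff_subset⟩
    have hA'ne : ∀ j ∈ N, (A' j).Nonempty := by
      intro a ha
      by_cases haj : a = j0
      · rw [haj, hA'j0]
        exact Finset.card_pos.mp (by omega)
      · rw [hA'val a haj]
        exact hBne a (Finset.mem_erase.mpr ⟨haj, ha⟩)
    refine ⟨A', key A' hA'part hA'src,
      N.filter (fun j => (A' j).card = 1), Finset.filter_subset _ _, ?_, ?_⟩
    · exact countS A' hA'part hA'ne ⟨j0, hj0, by rw [hA'j0, hRcard]⟩
    · intro j hjS; exact (Finset.mem_filter.mp hjS).2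
end

section
/- Let I be an ordered chores instance with n agents and m = n + c chores for some integer c > 0. Suppose there is an integer n_{c−1} > 0 such that every chores instance with n' ≥ n_{c−1} agents and n' + (c − 1) chores has an MMS allocation, and suppose n − 1 ≥ n_{c−1}. If some agent i of I has an MMS partition with at least n − 2 bundles of size less than two and at least n − 1 bundles of size less than three, then I has an MMS allocation. -/
open Finset

section MSBhelpers

open Finset

variable {N M : Finset ℕ} {v : ℕ → ℝ}

lemma MSB.bval_le_of_mem (hv : ∀ g ∈ M, v g ≤ 0) {B : Finset ℕ} (hBM : B ⊆ M)
    {g : ℕ} (hg : g ∈ B) : bval v B ≤ v g := by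
  have h1 := Finset.sum_erase_add B v hg
  have h2 : ∑ x ∈ B.erase g, v x ≤ 0 :=
    Finset.sum_nonpos fun x hx => hv x (hBM (Finset.mem_of_mem_erase hx))
  unfold bval
  linarith

lemma MSB.bval_nonpos (hv : ∀ g ∈ M, v g ≤ 0) {B : Finset ℕ} (hBM : B ⊆ M) :
    bval v B ≤ 0 :=
  Finset.sum_nonpos fun x hx => hv x (hBM hx)

lemma MSB.bval_erase {B : Finset ℕ} {g : ℕ} (hg : g ∈ B) :
    bval v (B.erase g) = bval v B - v g := by
  have h1 := Finset.sum_erase_add B v hg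
  unfold bval
  linarith

lemma MSB.bval_le_pair (hv : ∀ g ∈ M, v g ≤ 0) {B : Finset ℕ} (hBM : B ⊆ M)
    {a b : ℕ} (hab : a ≠ b) (ha : a ∈ B) (hb : b ∈ B) : bval v B ≤ v a + v b := by
  have h1 : bval v (B.erase a) = bval v B - v a := MSB.bval_erase ha
  have h2 : bval v (B.erase a) ≤ v b :=
    MSB.bval_le_of_mem hv ((Finset.erase_subset _ _).trans hBM)
      (Finset.mem_erase.2 ⟨fun h => hab h.symm, hb⟩)
  linarith

lemma MSB.sInf_parts_le (Q : ℕ → Finset ℕ) {q : ℕ} (hq : q ∈ N) :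
    sInf ((fun k => bval v (Q k)) '' (N : Set ℕ)) ≤ bval v (Q q) :=
  csInf_le ((N.finite_toSet.image _).bddBelow) ⟨q, Finset.mem_coe.2 hq, rfl⟩

lemma MSB.mem_mms_set {Q : ℕ → Finset ℕ} (hQ : IsPartition N M Q) :
    sInf ((fun k => bval v (Q k)) '' (N : Set ℕ)) ∈
      { x | ∃ A : ℕ → Finset ℕ, IsPartition N M A ∧
        x = sInf ((fun i => bval v (A i)) '' (N : Set ℕ)) } :=
  ⟨Q, hQ, rfl⟩

lemma MSB.mms_set_le_zero (hv : ∀ g ∈ M, v g ≤ 0) (hN : N.Nonempty) :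
    ∀ x ∈ { x | ∃ A : ℕ → Finset ℕ, IsPartition N M A ∧
        x = sInf ((fun i => bval v (A i)) '' (N : Set ℕ)) }, x ≤ 0 := by
  rintro x ⟨Q, hQ, rfl⟩
  obtain ⟨q, hq⟩ := hN
  exact (MSB.sInf_parts_le Q hq).trans (MSB.bval_nonpos hv (hQ.1 q hq))

lemma MSB.mms_le_single (hv : ∀ g ∈ M, v g ≤ 0) {Q0 : ℕ → Finset ℕ}
    (hQ0 : IsPartition N M Q0) {g : ℕ} (hg : g ∈ M) : mms N M v ≤ v g := by
  apply csSup_le ⟨_, MSB.mem_mms_set hQ0⟩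
  rintro x ⟨Q, hQ, rfl⟩
  have hg' : g ∈ N.biUnion Q := hQ.2.2 ▸ hg
  obtain ⟨q, hqN, hgq⟩ := Finset.mem_biUnion.1 hg'
  exact (MSB.sInf_parts_le Q hqN).trans (MSB.bval_le_of_mem hv (hQ.1 q hqN) hgq)

lemma MSB.mms_nonpos (hv : ∀ g ∈ M, v g ≤ 0) (hN : N.Nonempty) {Q0 : ℕ → Finset ℕ}
    (hQ0 : IsPartition N M Q0) : mms N M v ≤ 0 :=
  csSup_le ⟨_, MSB.mem_mms_set hQ0⟩ (MSB.mms_set_le_zero hv hN)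

lemma MSB.mms_le_smallpart (hv : ∀ g ∈ M, v g ≤ 0) (hN : N.Nonempty)
    {Q0 : ℕ → Finset ℕ} (hQ0 : IsPartition N M Q0) {B : Finset ℕ} (hBM : B ⊆ M)
    (hB : B.card ≤ 1) : mms N M v ≤ bval v B := by
  interval_cases h : B.card
  · rw [Finset.card_eq_zero.1 h]
    have : bval v (∅ : Finset ℕ) = 0 := Finset.sum_empty
    rw [this]
    exact MSB.mms_nonpos hv hN hQ0
  · obtain ⟨g, hgB⟩ := Finset.card_eq_one.1 h
    rw [hgB]
    have : bval v ({g} : Finset ℕ) = v g := Finset.sum_singleton _ _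
    rw [this]
    exact MSB.mms_le_single hv hQ0 (hBM (hgB ▸ Finset.mem_singleton_self g))

lemma MSB.le_mms (hv : ∀ g ∈ M, v g ≤ 0) (hN : N.Nonempty) {Q : ℕ → Finset ℕ}
    (hQ : IsPartition N M Q) {r : ℝ} (h : ∀ q ∈ N, r ≤ bval v (Q q)) :
    r ≤ mms N M v := by
  have h1 : r ≤ sInf ((fun k => bval v (Q k)) '' (N : Set ℕ)) := by
    apply le_csInf
    · obtain ⟨q, hq⟩ := hN
      exact ⟨_, ⟨q, Finset.mem_coe.2 hq, rfl⟩⟩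
    · rintro x ⟨q, hq, rfl⟩
      exact h q (Finset.mem_coe.1 hq)
  exact h1.trans (le_csSup ⟨0, MSB.mms_set_le_zero hv hN⟩ (MSB.mem_mms_set hQ))

lemma MSB.exists_approx {Q0 : ℕ → Finset ℕ} (hQ0 : IsPartition N M Q0) {y : ℝ}
    (hy : y < mms N M v) :
    ∃ Q : ℕ → Finset ℕ, IsPartition N M Q ∧ ∀ q ∈ N, y < bval v (Q q) := by
  obtain ⟨x, hx, hyx⟩ := exists_lt_of_lt_csSup ⟨_, MSB.mem_mms_set hQ0⟩ hy
  obtain ⟨Q, hQ, rfl⟩ := hx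
  exact ⟨Q, hQ, fun q hq => hyx.trans_le (MSB.sInf_parts_le Q hq)⟩

/-- item relabeling up: `Icc 1 (m-2) → Icc 1 m \ {c1, c2}`. -/
def MSB.up (c1 c2 t : ℕ) : ℕ := if t < c1 then t else if t + 1 < c2 then t + 1 else t + 2

/-- item relabeling down: inverse of `MSB.up`. -/
def MSB.down (c1 c2 s : ℕ) : ℕ := if s < c1 then s else if s < c2 then s - 1 else s - 2

lemma MSB.up_spec {c1 c2 m t : ℕ} (h1 : 1 ≤ c1) (h12 : c1 < c2) (h2 : c2 ≤ m)
    (ht1 : 1 ≤ t) (ht2 : t ≤ m - 2) :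
    (1 ≤ MSB.up c1 c2 t ∧ MSB.up c1 c2 t ≤ m) ∧ MSB.up c1 c2 t ≠ c1 ∧
      MSB.up c1 c2 t ≠ c2 ∧ MSB.down c1 c2 (MSB.up c1 c2 t) = t := by
  unfold MSB.up MSB.down
  split_ifs <;> omega

lemma MSB.down_spec {c1 c2 m s : ℕ} (h1 : 1 ≤ c1) (h12 : c1 < c2) (h2 : c2 ≤ m)
    (hs1 : 1 ≤ s) (hs2 : s ≤ m) (hne1 : s ≠ c1) (hne2 : s ≠ c2) :
    (1 ≤ MSB.down c1 c2 s ∧ MSB.down c1 c2 s ≤ m - 2) ∧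
      MSB.up c1 c2 (MSB.down c1 c2 s) = s := by
  unfold MSB.up MSB.down
  split_ifs <;> omega

/-- agent relabeling: `Icc 1 (n-1) → Icc 1 n \ {i}`. -/
def MSB.ins (i k : ℕ) : ℕ := if k < i then k else k + 1

/-- inverse agent relabeling. -/
def MSB.del (i j : ℕ) : ℕ := if j < i then j else j - 1

lemma MSB.ins_spec {n i k : ℕ} (hi1 : 1 ≤ i) (hi2 : i ≤ n) (hk1 : 1 ≤ k)
    (hk2 : k ≤ n - 1) :
    (1 ≤ MSB.ins i k ∧ MSB.ins i k ≤ n) ∧ MSB.ins i k ≠ i ∧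
      MSB.del i (MSB.ins i k) = k := by
  unfold MSB.ins MSB.del
  split_ifs <;> omega

lemma MSB.del_spec {n i j : ℕ} (hi1 : 1 ≤ i) (hi2 : i ≤ n) (hj1 : 1 ≤ j)
    (hj2 : j ≤ n) (hne : j ≠ i) :
    (1 ≤ MSB.del i j ∧ MSB.del i j ≤ n - 1) ∧ MSB.ins i (MSB.del i j) = j := by
  unfold MSB.ins MSB.del
  split_ifs <;> omega

lemma MSB.swap_mem {a b k : ℕ} (ha : a ∈ N) (hb : b ∈ N) (hk : k ∈ N) :
    Equiv.swap a b k ∈ N := by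
  rcases eq_or_ne k a with rfl | h1
  · rwa [Equiv.swap_apply_left]
  rcases eq_or_ne k b with rfl | h2
  · rwa [Equiv.swap_apply_right]
  rwa [Equiv.swap_apply_of_ne_of_ne h1 h2]

end MSBhelpers

theorem mostly_small_bundles_chores (n c : ℕ) (hc : 0 < c) (v : ℕ → ℕ → ℝ)
    (hchores : ChoresInstance (Finset.Icc 1 n) (Finset.Icc 1 (n + c)) v)
    (hord : OrderedChores (Finset.Icc 1 n) (Finset.Icc 1 (n + c)) v)
    (nc1 : ℕ) (hnc1 : 0 < nc1)
    (hex : ∀ n' : ℕ, nc1 ≤ n' → ∀ v' : ℕ → ℕ → ℝ,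
      ChoresInstance (Finset.Icc 1 n') (Finset.Icc 1 (n' + (c - 1))) v' →
      ExistsMMSAllocation (Finset.Icc 1 n') (Finset.Icc 1 (n' + (c - 1))) v')
    (hn : nc1 ≤ n - 1)
    (i : ℕ) (hi : i ∈ Finset.Icc 1 n)
    (A : ℕ → Finset ℕ)
    (hA : IsMMSPartition (Finset.Icc 1 n) (Finset.Icc 1 (n + c)) (v i) A)
    (h2 : ∃ S ⊆ Finset.Icc 1 n, n - 2 ≤ S.card ∧ ∀ j ∈ S, (A j).card < 2)
    (h3 : ∃ S ⊆ Finset.Icc 1 n, n - 1 ≤ S.card ∧ ∀ j ∈ S, (A j).card < 3) :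
    ExistsMMSAllocation (Finset.Icc 1 n) (Finset.Icc 1 (n + c)) v := by
  classical
  set m := n + c with hm
  set N := Finset.Icc 1 n with hN
  set M := Finset.Icc 1 m with hM
  have hn2 : 2 ≤ n := by omega
  have hin : 1 ≤ i ∧ i ≤ n := Finset.mem_Icc.1 hi
  have hNne : N.Nonempty := ⟨1, Finset.mem_Icc.2 ⟨le_refl 1, by omega⟩⟩
  have hNcard : N.card = n := by rw [hN, Nat.card_Icc]; omega
  have hvle : ∀ k ∈ N, ∀ g ∈ M, v k g ≤ 0 := hchores
  have hApart : IsPartition N M A := hA.1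
  have hAval : ∀ j ∈ N, mms N M (v i) ≤ bval (v i) (A j) := hA.2
  obtain ⟨iB, hiBN, hiBmax⟩ := N.exists_max_image (fun k => (A k).card) hNne
  have heraseNe : (N.erase iB).Nonempty := by
    rw [← Finset.card_pos, Finset.card_erase_of_mem hiBN]; omega
  obtain ⟨iC, hiCN', hiCmax⟩ :=
    (N.erase iB).exists_max_image (fun k => (A k).card) heraseNe
  have hiCN : iC ∈ N := Finset.mem_of_mem_erase hiCN'
  have hCB : iC ≠ iB := Finset.ne_of_mem_erase hiCN'
  obtain ⟨S2, hS2N, hS2c, hS2s⟩ := h2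
  obtain ⟨S3, hS3N, hS3c, hS3s⟩ := h3
  have hsmall : ∀ q ∈ N, q ≠ iB → q ≠ iC → (A q).card ≤ 1 := by
    intro q hqN hqB hqC
    by_contra hq
    push_neg at hq
    have hq2 : 2 ≤ (A q).card := hq
    have hC2' : 2 ≤ (A iC).card :=
      le_trans hq2 (hiCmax q (Finset.mem_erase.2 ⟨hqB, hqN⟩))
    have hB2 : 2 ≤ (A iB).card := le_trans hC2' (hiBmax iC hiCN)
    have hnot : ∀ r, 2 ≤ (A r).card → r ∉ S2 := by
      intro r h2r hr
      have := hS2s r hr; omega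
    have hsub : ({q, iB, iC} : Finset ℕ) ⊆ N \ S2 := by
      intro x hx
      simp only [Finset.mem_insert, Finset.mem_singleton] at hx
      rcases hx with rfl | rfl | rfl
      · exact Finset.mem_sdiff.2 ⟨hqN, hnot _ hq2⟩
      · exact Finset.mem_sdiff.2 ⟨hiBN, hnot _ hB2⟩
      · exact Finset.mem_sdiff.2 ⟨hiCN, hnot _ hC2'⟩
    have hcard3 : ({q, iB, iC} : Finset ℕ).card = 3 := by
      rw [Finset.card_insert_of_notMem, Finset.card_insert_of_notMem,
        Finset.card_singleton]
      · simp only [Finset.mem_singleton]; exact fun h => hCB h.symm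
      · simp only [Finset.mem_insert, Finset.mem_singleton]
        push_neg
        exact ⟨hqB, hqC⟩
    have hsd : (N \ S2).card = N.card - S2.card := Finset.card_sdiff_of_subset hS2N
    have hS2le : S2.card ≤ N.card := Finset.card_le_card hS2N
    have hle3 := Finset.card_le_card hsub
    omega
  have hC2 : (A iC).card ≤ 2 := by
    by_contra h
    push_neg at h
    have h3c : 3 ≤ (A iC).card := h
    have hB3 : 3 ≤ (A iB).card := le_trans h3c (hiBmax iC hiCN)
    have hnot : ∀ r, 3 ≤ (A r).card → r ∉ S3 := by
      intro r h3r hr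
      have := hS3s r hr; omega
    have hsub : ({iB, iC} : Finset ℕ) ⊆ N \ S3 := by
      intro x hx
      simp only [Finset.mem_insert, Finset.mem_singleton] at hx
      rcases hx with rfl | rfl
      · exact Finset.mem_sdiff.2 ⟨hiBN, hnot _ hB3⟩
      · exact Finset.mem_sdiff.2 ⟨hiCN, hnot _ h3c⟩
    have hcard2 : ({iB, iC} : Finset ℕ).card = 2 := by
      rw [Finset.card_insert_of_notMem, Finset.card_singleton]
      simp only [Finset.mem_singleton]
      exact fun h' => hCB h'.symm
    have hsd : (N \ S3).card = N.card - S3.card := Finset.card_sdiff_of_subset hS3N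
    have hS3le : S3.card ≤ N.card := Finset.card_le_card hS3N
    have hle2 := Finset.card_le_card hsub
    omega
  by_cases hdir : ∃ j ∈ N, j ≠ i ∧ mms N M (v j) ≤ bval (v j) (A iC)
  · -- direct allocation of A via a permutation
    obtain ⟨j, hjN, hji, hjval⟩ := hdir
    set s : Equiv.Perm ℕ := Equiv.swap i iB with hs
    set e : Equiv.Perm ℕ := s.trans (Equiv.swap (s j) iC) with he
    have hsi : s i = iB := Equiv.swap_apply_left _ _
    have hsj_ne : s j ≠ iB := fun h => hji (s.injective (h.trans hsi.symm))
    have hei : e i = iB := by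
      show Equiv.swap (s j) iC (s i) = iB
      rw [hsi]
      exact Equiv.swap_apply_of_ne_of_ne (Ne.symm hsj_ne) (Ne.symm hCB)
    have hej : e j = iC := by
      show Equiv.swap (s j) iC (s j) = iC
      exact Equiv.swap_apply_left _ _
    have heN : ∀ k ∈ N, e k ∈ N := by
      intro k hk
      have h1 : s k ∈ N := MSB.swap_mem hi hiBN hk
      exact MSB.swap_mem (MSB.swap_mem hi hiBN hjN) hiCN h1
    have himage : N.image (fun k => e k) = N := by
      apply Finset.eq_of_subset_of_card_le
      · intro x hx
        obtain ⟨k, hk, rfl⟩ := Finset.mem_image.1 hx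
        exact heN k hk
      · exact le_of_eq (Finset.card_image_of_injective N e.injective).symm
    refine ⟨fun k => A (e k), ⟨fun k hk => hApart.1 _ (heN k hk),
      fun k hk l hl hkl =>
        hApart.2.1 _ (heN k hk) _ (heN l hl) (fun h => hkl (e.injective h)), ?_⟩, ?_⟩
    · ext a
      simp only [Finset.mem_biUnion]
      constructor
      · rintro ⟨k, hk, ha⟩
        exact hApart.1 _ (heN k hk) ha
      · intro haM
        have ha2 : a ∈ N.biUnion A := hApart.2.2.symm ▸ haM
        obtain ⟨q, hqN, haq⟩ := Finset.mem_biUnion.1 ha2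
        have hqim : q ∈ N.image (fun k => e k) := himage.symm ▸ hqN
        obtain ⟨k, hkN, hek⟩ := Finset.mem_image.1 hqim
        exact ⟨k, hkN, by rw [hek]; exact haq⟩
    · intro k hk
      show mms N M (v k) ≤ bval (v k) (A (e k))
      rcases eq_or_ne k i with rfl | hki
      · rw [hei]; exact hAval iB hiBN
      rcases eq_or_ne k j with rfl | hkj
      · rw [hej]; exact hjval
      · have hkB : e k ≠ iB := fun h => hki (e.injective (h.trans hei.symm))
        have hkC : e k ≠ iC := fun h => hkj (e.injective (h.trans hej.symm))
        exact MSB.mms_le_smallpart (hvle k hk) hNne hApart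
          (hApart.1 _ (heN k hk)) (hsmall _ (heN k hk) hkB hkC)
  · -- reduction case
    push_neg at hdir
    have heiNe : (N.erase i).Nonempty := by
      rw [← Finset.card_pos, Finset.card_erase_of_mem hi]; omega
    obtain ⟨j0, hj0⟩ := heiNe
    have hj0N : j0 ∈ N := Finset.mem_of_mem_erase hj0
    have hj0i : j0 ≠ i := Finset.ne_of_mem_erase hj0
    have hcard2 : (A iC).card = 2 := by
      rcases Nat.lt_or_ge (A iC).card 2 with h | h
      · exact absurd
          (MSB.mms_le_smallpart (hvle j0 hj0N) hNne hApart (hApart.1 iC hiCN) (by omega))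
          (not_le.2 (hdir j0 hj0N hj0i))
      · omega
    obtain ⟨a, b, hab, hCab⟩ := Finset.card_eq_two.1 hcard2
    obtain ⟨c1, c2, h12, hCeq⟩ : ∃ c1 c2, c1 < c2 ∧ A iC = {c1, c2} := by
      rcases Nat.lt_or_ge a b with h | h
      · exact ⟨a, b, h, hCab⟩
      · exact ⟨b, a, by omega, by rw [hCab, Finset.pair_comm]⟩
    have hc1M : c1 ∈ M := hApart.1 iC hiCN (hCeq ▸ Finset.mem_insert_self _ _)
    have hc2M : c2 ∈ M := hApart.1 iC hiCN (hCeq ▸ by simp)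
    have hc1b : 1 ≤ c1 ∧ c1 ≤ m := Finset.mem_Icc.1 hc1M
    have hc2b : 1 ≤ c2 ∧ c2 ≤ m := Finset.mem_Icc.1 hc2M
    set v' : ℕ → ℕ → ℝ := fun k t => v (MSB.ins i k) (MSB.up c1 c2 t) with hv'
    have hv'eq : ∀ k t, v' k t = v (MSB.ins i k) (MSB.up c1 c2 t) := fun _ _ => rfl
    have e1 : n - 1 + (c - 1) = m - 2 := by omega
    have hex2 := hex (n - 1) hn v'
    rw [e1] at hex2
    have hchores' : ChoresInstance (Finset.Icc 1 (n - 1)) (Finset.Icc 1 (m - 2)) v' := by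
      intro k hk t ht
      have hk' := Finset.mem_Icc.1 hk
      have ht' := Finset.mem_Icc.1 ht
      have hkN := (MSB.ins_spec hin.1 hin.2 hk'.1 hk'.2).1
      have htM := (MSB.up_spec hc1b.1 h12 hc2b.2 ht'.1 ht'.2).1
      rw [hv'eq]
      exact hchores _ (Finset.mem_Icc.2 hkN) _ (Finset.mem_Icc.2 htM)
    obtain ⟨A', hA'p, hA'v⟩ := hex2 hchores'
    -- transport of mms through the reduction
    have htrans : ∀ j ∈ N, j ≠ i →
        mms N M (v j) ≤ mms (Finset.Icc 1 (n - 1)) (Finset.Icc 1 (m - 2)) (v' (MSB.del i j)) := by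
      intro j hjN hji
      have hjb := Finset.mem_Icc.1 hjN
      have hdel := MSB.del_spec hin.1 hin.2 hjb.1 hjb.2 hji
      set k' := MSB.del i j with hk'd
      have hk'mem : k' ∈ Finset.Icc 1 (n - 1) := Finset.mem_Icc.2 hdel.1
      have hinsk : MSB.ins i k' = j := hdel.2
      by_contra hcon
      push_neg at hcon
      set μ := mms N M (v j) with hμ
      set μ' := mms (Finset.Icc 1 (n - 1)) (Finset.Icc 1 (m - 2)) (v' k') with hμ'
      have hw : bval (v j) (A iC) = v j c1 + v j c2 := by
        rw [hCeq]; exact Finset.sum_pair h12.ne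
      have hwμ : v j c1 + v j c2 < μ := by
        have h' := hdir j hjN hji; rw [hw] at h'; exact h'
      set ε := min ((μ - μ') / 3) (μ - (v j c1 + v j c2)) with hε
      have hε1 : 0 < ε := lt_min (by linarith) (by linarith)
      have hε2 : ε ≤ (μ - μ') / 3 := min_le_left _ _
      have hε3 : ε ≤ μ - (v j c1 + v j c2) := min_le_right _ _
      obtain ⟨Q, hQ, hQv⟩ := MSB.exists_approx hApart (show μ - ε < μ by linarith)
      have hc1' : c1 ∈ N.biUnion Q := hQ.2.2.symm ▸ hc1M
      obtain ⟨p1, hp1N, hc1p1⟩ := Finset.mem_biUnion.1 hc1'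
      have hc2' : c2 ∈ N.biUnion Q := hQ.2.2.symm ▸ hc2M
      obtain ⟨p2, hp2N, hc2p2⟩ := Finset.mem_biUnion.1 hc2'
      have hp12 : p1 ≠ p2 := by
        intro h
        subst h
        have hle := MSB.bval_le_pair (hvle j hjN) (hQ.1 p1 hp1N) h12.ne hc1p1 hc2p2
        have hgt := hQv p1 hp1N
        linarith
      set R : ℕ → Finset ℕ :=
        fun q => if q = p1 then ((Q p1).erase c1) ∪ ((Q p2).erase c2) else Q q with hR
      have hRp1 : R p1 = ((Q p1).erase c1) ∪ ((Q p2).erase c2) := by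
        rw [hR]; simp
      have hRne : ∀ q, q ≠ p1 → R q = Q q := by
        intro q h; rw [hR]; simp [h]
      have hc1only : ∀ q ∈ N, q ≠ p1 → c1 ∉ Q q := by
        intro q hqN hqp h
        exact (Finset.disjoint_left.1 (hQ.2.1 q hqN p1 hp1N hqp) h) hc1p1
      have hc2only : ∀ q ∈ N, q ≠ p2 → c2 ∉ Q q := by
        intro q hqN hqp h
        exact (Finset.disjoint_left.1 (hQ.2.1 q hqN p2 hp2N hqp) h) hc2p2
      have hRsub : ∀ q ∈ N, q ≠ p2 → R q ⊆ M ∧ c1 ∉ R q ∧ c2 ∉ R q := by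
        intro q hqN hqp2
        rcases eq_or_ne q p1 with rfl | hqp1
        · rw [hRp1]
          refine ⟨?_, ?_, ?_⟩
          · intro x hx
            rcases Finset.mem_union.1 hx with h | h
            · exact hQ.1 q hqN (Finset.mem_of_mem_erase h)
            · exact hQ.1 p2 hp2N (Finset.mem_of_mem_erase h)
          · intro h
            rcases Finset.mem_union.1 h with h | h
            · exact (Finset.notMem_erase _ _) h
            · exact hc1only p2 hp2N (Ne.symm hp12) (Finset.mem_of_mem_erase h)
          · intro h
            rcases Finset.mem_union.1 h with h | h
            · exact hc2only q hqN hqp2 (Finset.mem_of_mem_erase h)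
            · exact (Finset.notMem_erase _ _) h
        · rw [hRne q hqp1]
          exact ⟨hQ.1 q hqN, hc1only q hqN hqp1, hc2only q hqN hqp2⟩
      have hRval : ∀ q ∈ N, q ≠ p2 →
          min (μ - ε) (2 * (μ - ε) - (v j c1 + v j c2)) ≤ bval (v j) (R q) := by
        intro q hqN hqp2
        rcases eq_or_ne q p1 with rfl | hqp1
        · have hdisj : Disjoint ((Q q).erase c1) ((Q p2).erase c2) :=
            (hQ.2.1 q hqN p2 hp2N hqp2).mono (Finset.erase_subset _ _)
              (Finset.erase_subset _ _)
          have hun : bval (v j) (R q) =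
              bval (v j) ((Q q).erase c1) + bval (v j) ((Q p2).erase c2) := by
            rw [hRp1]
            exact Finset.sum_union hdisj
          have he1 : bval (v j) ((Q q).erase c1) = bval (v j) (Q q) - v j c1 :=
            MSB.bval_erase hc1p1
          have he2 : bval (v j) ((Q p2).erase c2) = bval (v j) (Q p2) - v j c2 :=
            MSB.bval_erase hc2p2
          have hq1 := hQv q hqN
          have hq2 := hQv p2 hp2N
          have hfin : 2 * (μ - ε) - (v j c1 + v j c2) ≤ bval (v j) (R q) := by
            rw [hun, he1, he2]; linarith
          exact le_trans (min_le_right _ _) hfin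
        · rw [hRne q hqp1]
          exact le_trans (min_le_left _ _) (le_of_lt (hQv q hqN))
      set A'' : ℕ → Finset ℕ :=
        fun t => (R (MSB.ins p2 t)).image (MSB.down c1 c2) with hA''
      have hA''eq : ∀ t, A'' t = (R (MSB.ins p2 t)).image (MSB.down c1 c2) :=
        fun _ => rfl
      have hp2b := Finset.mem_Icc.1 hp2N
      have hinsmem : ∀ t ∈ Finset.Icc 1 (n - 1),
          MSB.ins p2 t ∈ N ∧ MSB.ins p2 t ≠ p2 := by
        intro t ht
        have htb := Finset.mem_Icc.1 ht
        have hspec := MSB.ins_spec hp2b.1 hp2b.2 htb.1 htb.2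
        exact ⟨Finset.mem_Icc.2 hspec.1, hspec.2.1⟩
      have hRgood : ∀ q ∈ N, q ≠ p2 → ∀ x ∈ R q, x ∈ M ∧ x ≠ c1 ∧ x ≠ c2 := by
        intro q hqN hqp2 x hx
        obtain ⟨hsubM, hnc1, hnc2⟩ := hRsub q hqN hqp2
        exact ⟨hsubM hx, fun h => hnc1 (h ▸ hx), fun h => hnc2 (h ▸ hx)⟩
      have hA''sub : ∀ t ∈ Finset.Icc 1 (n - 1), A'' t ⊆ Finset.Icc 1 (m - 2) := by
        intro t ht x hx
        rw [hA''eq] at hx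
        obtain ⟨s0, hs0, rfl⟩ := Finset.mem_image.1 hx
        obtain ⟨hqN, hqp2⟩ := hinsmem t ht
        obtain ⟨hs0M, hs01, hs02⟩ := hRgood _ hqN hqp2 s0 hs0
        have hs0b := Finset.mem_Icc.1 hs0M
        exact Finset.mem_Icc.2
          (MSB.down_spec hc1b.1 h12 hc2b.2 hs0b.1 hs0b.2 hs01 hs02).1
      have hdownInj : ∀ (P : Finset ℕ), (∀ x ∈ P, x ∈ M ∧ x ≠ c1 ∧ x ≠ c2) →
          ∀ x ∈ P, ∀ y ∈ P, MSB.down c1 c2 x = MSB.down c1 c2 y → x = y := by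
        intro P hP x hx y hy hxy
        obtain ⟨hxM, hx1, hx2⟩ := hP x hx
        obtain ⟨hyM, hy1, hy2⟩ := hP y hy
        have hxb := Finset.mem_Icc.1 hxM
        have hyb := Finset.mem_Icc.1 hyM
        have ex := (MSB.down_spec hc1b.1 h12 hc2b.2 hxb.1 hxb.2 hx1 hx2).2
        have ey := (MSB.down_spec hc1b.1 h12 hc2b.2 hyb.1 hyb.2 hy1 hy2).2
        rw [← ex, ← ey, hxy]
      have hRdisj : ∀ q ∈ N, ∀ q' ∈ N, q ≠ p2 → q' ≠ p2 → q ≠ q' →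
          Disjoint (R q) (R q') := by
        intro q hqN q' hq'N hq2 hq'2 hqq'
        rcases eq_or_ne q p1 with rfl | hq1
        · have hq'1 : q' ≠ q := fun h => hqq' h.symm
          rw [hRp1, hRne q' hq'1]
          refine Finset.disjoint_union_left.2 ⟨?_, ?_⟩
          · exact (hQ.2.1 q hqN q' hq'N hqq').mono_left (Finset.erase_subset _ _)
          · exact (hQ.2.1 p2 hp2N q' hq'N (Ne.symm hq'2)).mono_left
              (Finset.erase_subset _ _)
        · rcases eq_or_ne q' p1 with rfl | hq'1
          · rw [hRne q hq1, hRp1]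
            refine Finset.disjoint_union_right.2 ⟨?_, ?_⟩
            · exact (hQ.2.1 q hqN q' hq'N hqq').mono_right (Finset.erase_subset _ _)
            · exact (hQ.2.1 q hqN p2 hp2N hq2).mono_right (Finset.erase_subset _ _)
          · rw [hRne q hq1, hRne q' hq'1]
            exact hQ.2.1 q hqN q' hq'N hqq'
      have hA''part : IsPartition (Finset.Icc 1 (n - 1)) (Finset.Icc 1 (m - 2)) A'' := by
        refine ⟨hA''sub, ?_, ?_⟩
        · intro t ht t' ht' htt'
          obtain ⟨hqN, hqp2⟩ := hinsmem t ht
          obtain ⟨hq'N, hq'p2⟩ := hinsmem t' ht'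
          have htb := Finset.mem_Icc.1 ht
          have ht'b := Finset.mem_Icc.1 ht'
          have hne : MSB.ins p2 t ≠ MSB.ins p2 t' := by
            intro h
            have ea := (MSB.ins_spec hp2b.1 hp2b.2 htb.1 htb.2).2.2
            have eb := (MSB.ins_spec hp2b.1 hp2b.2 ht'b.1 ht'b.2).2.2
            exact htt' (by rw [← ea, ← eb, h])
          have hd := hRdisj _ hqN _ hq'N hqp2 hq'p2 hne
          rw [Finset.disjoint_left]
          intro x hx hx'
          rw [hA''eq] at hx hx'
          obtain ⟨s0, hs0, hs0e⟩ := Finset.mem_image.1 hx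
          obtain ⟨s1, hs1, hs1e⟩ := Finset.mem_image.1 hx'
          obtain ⟨hM0, h01, h02⟩ := hRgood _ hqN hqp2 s0 hs0
          obtain ⟨hM1, h11, h12'⟩ := hRgood _ hq'N hq'p2 s1 hs1
          have hb0 := Finset.mem_Icc.1 hM0
          have hb1 := Finset.mem_Icc.1 hM1
          have e0 := (MSB.down_spec hc1b.1 h12 hc2b.2 hb0.1 hb0.2 h01 h02).2
          have e1'' := (MSB.down_spec hc1b.1 h12 hc2b.2 hb1.1 hb1.2 h11 h12').2
          have hss : s0 = s1 := by rw [← e0, ← e1'', hs0e, hs1e]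
          exact (Finset.disjoint_left.1 hd hs0) (hss ▸ hs1)
        · ext x
          simp only [Finset.mem_biUnion]
          constructor
          · rintro ⟨t, ht, hx⟩
            exact hA''sub t ht hx
          · intro hx
            have hxb := Finset.mem_Icc.1 hx
            have hup := MSB.up_spec hc1b.1 h12 hc2b.2 hxb.1 hxb.2
            set g := MSB.up c1 c2 x with hg
            have hgM : g ∈ M := Finset.mem_Icc.2 hup.1
            have hgbi : g ∈ N.biUnion Q := hQ.2.2.symm ▸ hgM
            obtain ⟨q, hqN, hgq⟩ := Finset.mem_biUnion.1 hgbi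
            have key : ∃ q' ∈ N, q' ≠ p2 ∧ g ∈ R q' := by
              rcases eq_or_ne q p2 with rfl | hqp2
              · refine ⟨p1, hp1N, hp12, ?_⟩
                rw [hRp1]
                exact Finset.mem_union.2 (Or.inr (Finset.mem_erase.2 ⟨hup.2.2.1, hgq⟩))
              · refine ⟨q, hqN, hqp2, ?_⟩
                rcases eq_or_ne q p1 with rfl | hqp1
                · rw [hRp1]
                  exact Finset.mem_union.2 (Or.inl (Finset.mem_erase.2 ⟨hup.2.1, hgq⟩))
                · rw [hRne q hqp1]; exact hgq
            obtain ⟨q', hq'N, hq'p2, hgR⟩ := key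
            have hq'b := Finset.mem_Icc.1 hq'N
            have hdq := MSB.del_spec hp2b.1 hp2b.2 hq'b.1 hq'b.2 hq'p2
            refine ⟨MSB.del p2 q', Finset.mem_Icc.2 hdq.1, ?_⟩
            rw [hA''eq]
            exact Finset.mem_image.2 ⟨g, by rw [hdq.2]; exact hgR, hup.2.2.2⟩
      have hv'le : ∀ g' ∈ Finset.Icc 1 (m - 2), v' k' g' ≤ 0 := by
        intro g' hg'
        have hgb := Finset.mem_Icc.1 hg'
        have hup := MSB.up_spec hc1b.1 h12 hc2b.2 hgb.1 hgb.2
        rw [hv'eq]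
        exact hchores _
          (Finset.mem_Icc.2 (MSB.ins_spec hin.1 hin.2 hdel.1.1 hdel.1.2).1)
          _ (Finset.mem_Icc.2 hup.1)
      have hA''val : ∀ t ∈ Finset.Icc 1 (n - 1),
          min (μ - ε) (2 * (μ - ε) - (v j c1 + v j c2)) ≤ bval (v' k') (A'' t) := by
        intro t ht
        obtain ⟨hqN, hqp2⟩ := hinsmem t ht
        have hbv : bval (v' k') (A'' t) = bval (v j) (R (MSB.ins p2 t)) := by
          rw [hA''eq]
          unfold bval
          rw [Finset.sum_image (hdownInj _ (hRgood _ hqN hqp2))]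
          apply Finset.sum_congr rfl
          intro s0 hs0
          obtain ⟨hsM, hs1, hs2⟩ := hRgood _ hqN hqp2 s0 hs0
          have hsb := Finset.mem_Icc.1 hsM
          have hud := (MSB.down_spec hc1b.1 h12 hc2b.2 hsb.1 hsb.2 hs1 hs2).2
          rw [hv'eq, hud, hinsk]
        rw [hbv]
        exact hRval _ hqN hqp2
      have hfinal := MSB.le_mms hv'le
        ⟨1, Finset.mem_Icc.2 ⟨le_refl 1, by omega⟩⟩ hA''part hA''val
      have hlt1 : μ' < μ - ε := by linarith
      have hlt2 : μ' < 2 * (μ - ε) - (v j c1 + v j c2) := by linarith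
      exact absurd hfinal (not_le.2 (lt_min hlt1 hlt2))
    -- assemble the final allocation
    set Alc : ℕ → Finset ℕ :=
      fun k => if k = i then A iC else (A' (MSB.del i k)).image (MSB.up c1 c2) with hAlc
    have hAlci : Alc i = A iC := by rw [hAlc]; simp
    have hAlcne : ∀ k, k ≠ i → Alc k = (A' (MSB.del i k)).image (MSB.up c1 c2) := by
      intro k h; rw [hAlc]; simp [h]
    have hupInj : ∀ (P : Finset ℕ), P ⊆ Finset.Icc 1 (m - 2) →
        ∀ x ∈ P, ∀ y ∈ P, MSB.up c1 c2 x = MSB.up c1 c2 y → x = y := by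
      intro P hP x hx y hy hxy
      have hxb := Finset.mem_Icc.1 (hP hx)
      have hyb := Finset.mem_Icc.1 (hP hy)
      have ex := (MSB.up_spec hc1b.1 h12 hc2b.2 hxb.1 hxb.2).2.2.2
      have ey := (MSB.up_spec hc1b.1 h12 hc2b.2 hyb.1 hyb.2).2.2.2
      rw [← ex, ← ey, hxy]
    have hdelmem : ∀ k ∈ N, k ≠ i → MSB.del i k ∈ Finset.Icc 1 (n - 1) ∧
        MSB.ins i (MSB.del i k) = k := by
      intro k hk hki
      have hkb := Finset.mem_Icc.1 hk
      have hdk := MSB.del_spec hin.1 hin.2 hkb.1 hkb.2 hki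
      exact ⟨Finset.mem_Icc.2 hdk.1, hdk.2⟩
    have hAlcsub : ∀ k ∈ N, Alc k ⊆ M := by
      intro k hk
      by_cases hki : k = i
      · subst hki; rw [hAlci]; exact hApart.1 iC hiCN
      · rw [hAlcne k hki]
        intro x hx
        obtain ⟨t, ht, rfl⟩ := Finset.mem_image.1 hx
        have htb := Finset.mem_Icc.1 (hA'p.1 _ (hdelmem k hk hki).1 ht)
        exact Finset.mem_Icc.2 (MSB.up_spec hc1b.1 h12 hc2b.2 htb.1 htb.2).1
    have himgne : ∀ k ∈ N, k ≠ i →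
        ∀ x ∈ Alc k, x ≠ c1 ∧ x ≠ c2 := by
      intro k hk hki x hx
      rw [hAlcne k hki] at hx
      obtain ⟨t, ht, rfl⟩ := Finset.mem_image.1 hx
      have htb := Finset.mem_Icc.1 (hA'p.1 _ (hdelmem k hk hki).1 ht)
      have hup := MSB.up_spec hc1b.1 h12 hc2b.2 htb.1 htb.2
      exact ⟨hup.2.1, hup.2.2.1⟩
    refine ⟨Alc, ⟨hAlcsub, ?_, ?_⟩, ?_⟩
    · intro k hk l hl hkl
      by_cases hki : k = i
      · subst hki
        have hli : l ≠ k := fun h => hkl h.symm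
        rw [Finset.disjoint_left]
        intro x hx hx'
        have hne := himgne l hl hli x hx'
        rw [hAlci, hCeq] at hx
        rcases Finset.mem_insert.1 hx with rfl | hx2
        · exact hne.1 rfl
        · rw [Finset.mem_singleton] at hx2
          exact hne.2 hx2
      · by_cases hli : l = i
        · subst hli
          rw [Finset.disjoint_left]
          intro x hx hx'
          have hne := himgne k hk hki x hx
          rw [hAlci, hCeq] at hx'
          rcases Finset.mem_insert.1 hx' with rfl | hx2
          · exact hne.1 rfl
          · rw [Finset.mem_singleton] at hx2
            exact hne.2 hx2
        · rw [hAlcne k hki, hAlcne l hli]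
          have hdk := hdelmem k hk hki
          have hdl := hdelmem l hl hli
          have hne : MSB.del i k ≠ MSB.del i l := by
            intro h
            exact hkl (by rw [← hdk.2, ← hdl.2, h])
          have hd := hA'p.2.1 _ hdk.1 _ hdl.1 hne
          rw [Finset.disjoint_left]
          intro x hx hx'
          obtain ⟨t, ht, hte⟩ := Finset.mem_image.1 hx
          obtain ⟨t', ht', ht'e⟩ := Finset.mem_image.1 hx'
          have htb := Finset.mem_Icc.1 (hA'p.1 _ hdk.1 ht)
          have ht'b := Finset.mem_Icc.1 (hA'p.1 _ hdl.1 ht')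
          have ea := (MSB.up_spec hc1b.1 h12 hc2b.2 htb.1 htb.2).2.2.2
          have eb := (MSB.up_spec hc1b.1 h12 hc2b.2 ht'b.1 ht'b.2).2.2.2
          have htt : t = t' := by rw [← ea, ← eb, hte, ht'e]
          exact (Finset.disjoint_left.1 hd ht) (htt ▸ ht')
    · ext x
      simp only [Finset.mem_biUnion]
      constructor
      · rintro ⟨k, hk, hx⟩
        exact hAlcsub k hk hx
      · intro hxM
        by_cases hxC : x ∈ A iC
        · exact ⟨i, hi, by rw [hAlci]; exact hxC⟩
        · have hxb := Finset.mem_Icc.1 hxM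
          have hx1 : x ≠ c1 := fun h => hxC (by rw [hCeq, h]; simp)
          have hx2 : x ≠ c2 := fun h => hxC (by rw [hCeq, h]; simp)
          have hdn := MSB.down_spec hc1b.1 h12 hc2b.2 hxb.1 hxb.2 hx1 hx2
          have hmem : MSB.down c1 c2 x ∈ Finset.Icc 1 (m - 2) := Finset.mem_Icc.2 hdn.1
          have hbi : MSB.down c1 c2 x ∈ (Finset.Icc 1 (n - 1)).biUnion A' :=
            hA'p.2.2.symm ▸ hmem
          obtain ⟨t0, ht0, hxt0⟩ := Finset.mem_biUnion.1 hbi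
          have ht0b := Finset.mem_Icc.1 ht0
          have hins := MSB.ins_spec hin.1 hin.2 ht0b.1 ht0b.2
          refine ⟨MSB.ins i t0, Finset.mem_Icc.2 hins.1, ?_⟩
          rw [hAlcne _ hins.2.1, hins.2.2]
          exact Finset.mem_image.2 ⟨_, hxt0, hdn.2⟩
    · intro k hk
      by_cases hki : k = i
      · subst hki
        rw [hAlci]
        exact hAval iC hiCN
      · rw [hAlcne k hki]
        have hdk := hdelmem k hk hki
        have hbv : bval (v k) ((A' (MSB.del i k)).image (MSB.up c1 c2)) =
            bval (v' (MSB.del i k)) (A' (MSB.del i k)) := by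
          unfold bval
          rw [Finset.sum_image (hupInj _ (hA'p.1 _ hdk.1))]
          apply Finset.sum_congr rfl
          intro t ht
          rw [hv'eq, hdk.2]
        rw [hbv]
        exact le_trans (htrans k hk hki) (hA'v _ hdk.1)
end
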